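/- arXiv:2104.12611 — 9 statements merged into one kernel-verified Lean document; each statement's English description precedes it below -/
import Mathlib

section
/- Let 𝔄 = Π_{i=1}^{k} M_{n_i}(ℂ) be a finite direct sum of full matrix algebras, and let π : 𝔄 → M_N(ℂ) be an injective unital star-algebra homomorphism. Then there exist positive integers m₁,…,m_k with Σ_i n_i·m_i = N, a bijection between the index set of size N and the sigma type Σ i, (Fin n_i × Fin m_i), and a unitary matrix U ∈ M_N(ℂ), such that for every x = (x₁,…,x_k) ∈ 𝔄, π(x) = U · D(x) · U*, where D(x) is (under the index bijection) the block-diagonal matrix ⊕_{i=1}^{k} (x_i ⊗ I_{m_i}), with x_i ⊗ I_{m_i} the Kronecker product of x_i with the m_i×m_i identity. -/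
open Matrix
open scoped Kronecker

namespace FaithfulRepAux
variable {k N : ℕ} {n : Fin k → ℕ}

noncomputable def matUnit (n : Fin k → ℕ) (i : Fin k) (a b : Fin (n i)) :
    ∀ j, Matrix (Fin (n j)) (Fin (n j)) ℂ := Pi.single i (Matrix.single a b 1)

lemma matUnit_mul_same (i : Fin k) (a b c d : Fin (n i)) :
    matUnit n i a b * matUnit n i c d = if b = c then matUnit n i a d else 0 := by
  funext j
  rcases eq_or_ne j i with rfl | hj
  · by_cases hbc : b = c
    · subst hbc
      simp [matUnit, Matrix.single_mul_single_same]
    · simp [matUnit, hbc, Matrix.single_mul_single_of_ne _ _ _ _ hbc]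
  · split_ifs <;> simp [matUnit, Pi.single_apply, hj]

lemma matUnit_mul_ne {i j : Fin k} (h : i ≠ j) (a b : Fin (n i)) (c d : Fin (n j)) :
    matUnit n i a b * matUnit n j c d = 0 := by
  funext l
  rcases eq_or_ne l i with rfl | hl
  · simp [matUnit, Pi.single_apply, h.symm]
  · simp [matUnit, Pi.single_apply, hl]

lemma matUnit_star (i : Fin k) (a b : Fin (n i)) :
    star (matUnit n i a b) = matUnit n i b a := by
  funext l
  rcases eq_or_ne l i with rfl | hl
  · simp only [Pi.star_apply, matUnit, Pi.single_eq_same]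
    ext r s
    simp [Matrix.conjTranspose_apply, Matrix.single, and_comm]
  · simp [matUnit, Pi.single_apply, hl]

lemma sum_stdBasisMatrix_diag (M : ℕ) : ∑ a : Fin M, Matrix.single a a (1:ℂ) = 1 := by
  ext r s
  simp [Matrix.single, Matrix.one_apply, Matrix.sum_apply, ite_and, Finset.sum_ite_eq, eq_comm]

lemma matUnit_sum : ∑ i, ∑ a, matUnit n i a a = (1 : ∀ j, Matrix (Fin (n j)) (Fin (n j)) ℂ) := by
  funext j
  simp only [Finset.sum_apply, matUnit, Pi.single_apply]
  rw [Finset.sum_eq_single j]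
  · simp [sum_stdBasisMatrix_diag]
  · intro i _ hij
    simp [hij.symm]
  · simp

lemma matUnit_ne_zero (i : Fin k) (a b : Fin (n i)) : matUnit n i a b ≠ 0 := by
  intro h
  have := congrFun h i
  simp only [matUnit, Pi.single_eq_same, Pi.zero_apply] at this
  have := congrFun (congrFun this a) b
  simp [Matrix.single] at this

lemma mul_matUnit (x : ∀ j, Matrix (Fin (n j)) (Fin (n j)) ℂ) (i : Fin k) (a z : Fin (n i)) :
    x * matUnit n i a z = ∑ b, x i b a • matUnit n i b z := by
  funext l
  rcases eq_or_ne l i with rfl | hl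
  · simp only [Pi.mul_apply, matUnit, Pi.single_eq_same, Finset.sum_apply, Pi.smul_apply]
    ext r s
    by_cases hz : z = s <;>
      simp [Matrix.mul_apply, Matrix.single, Matrix.sum_apply, Matrix.smul_apply,
        ite_and, hz, Finset.sum_ite_eq, Finset.sum_ite_eq']
  · simp [matUnit, Pi.single_apply, hl]

lemma eq_sum_matUnit (x : ∀ j, Matrix (Fin (n j)) (Fin (n j)) ℂ) :
    x = ∑ i, ∑ a, ∑ b, x i a b • matUnit n i a b := by
  have h : x = ∑ i, ∑ a, ∑ b, x i b a • matUnit n i b a := by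
    have h := congrArg (x * ·) matUnit_sum.symm
    simpa [Finset.mul_sum, mul_matUnit] using h
  conv_lhs => rw [h]
  exact Finset.sum_congr rfl fun i _ => Finset.sum_comm

lemma tl_mulVec (A : Matrix (Fin N) (Fin N) ℂ) (v : EuclideanSpace ℂ (Fin N)) (j : Fin N) :
    Matrix.toEuclideanLin A v j = (A *ᵥ (v : Fin N → ℂ)) j := rfl

lemma tl_mul (A B : Matrix (Fin N) (Fin N) ℂ) :
    Matrix.toEuclideanLin (A * B)
      = (Matrix.toEuclideanLin A).comp (Matrix.toEuclideanLin B) := by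
  ext v j
  simp [Matrix.toEuclideanLin_apply, Matrix.mulVec_mulVec]

lemma tl_one : (Matrix.toEuclideanLin (1 : Matrix (Fin N) (Fin N) ℂ)) = LinearMap.id := by
  ext v j
  simp [Matrix.toEuclideanLin_apply]

lemma inner_tl_left (A : Matrix (Fin N) (Fin N) ℂ) (x y : EuclideanSpace ℂ (Fin N)) :
    inner (𝕜 := ℂ) (Matrix.toEuclideanLin A x) y
      = inner (𝕜 := ℂ) x (Matrix.toEuclideanLin Aᴴ y) := by
  rw [Matrix.toEuclideanLin_conjTranspose_eq_adjoint, LinearMap.adjoint_inner_right]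

lemma esum_apply {ι : Type*} [Fintype ι] (g : ι → EuclideanSpace ℂ (Fin N)) (j : Fin N) :
    (∑ b, g b) j = ∑ b, g b j :=
  by rw [WithLp.ofLp_sum]; exact Finset.sum_apply j Finset.univ _

lemma esmul_apply (c : ℂ) (v : EuclideanSpace ℂ (Fin N)) (j : Fin N) : (c • v) j = c * v j :=
  rfl

end FaithfulRepAux

set_option maxHeartbeats 2000000 in
open FaithfulRepAux in
/-- Any injective unital star-algebra homomorphism (faithful non-degenerate
finite-dimensional representation) `π : Π i, M_{n i}(ℂ) → M_N(ℂ)` is, up to a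
unitary `U` and a relabelling `e` of the `N` indices by `Σ i, Fin (n i) × Fin (m i)`,
the block-diagonal representation `x ↦ ⊕ i, (x i ⊗ I_{m i})` with multiplicities
`m i > 0` satisfying `Σ i, n i * m i = N`. -/
theorem faithful_representation_eq_blockDiagonal_kronecker_conj
    (k N : ℕ) (n : Fin k → ℕ) (hn : ∀ i, 0 < n i)
    (π : (∀ i : Fin k, Matrix (Fin (n i)) (Fin (n i)) ℂ) →⋆ₐ[ℂ] Matrix (Fin N) (Fin N) ℂ)
    (hinj : Function.Injective π) :
    ∃ m : Fin k → ℕ, (∀ i, 0 < m i) ∧ (∑ i, n i * m i = N) ∧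
      ∃ (e : Fin N ≃ (Σ i : Fin k, Fin (n i) × Fin (m i)))
        (U : Matrix (Fin N) (Fin N) ℂ),
        U * Uᴴ = 1 ∧ Uᴴ * U = 1 ∧
        ∀ x : ∀ i : Fin k, Matrix (Fin (n i)) (Fin (n i)) ℂ,
          π x = U *
            (Matrix.blockDiagonal'
              (fun i => (x i) ⊗ₖ (1 : Matrix (Fin (m i)) (Fin (m i)) ℂ))).submatrix e e
            * Uᴴ := by
  classical
  set z : ∀ i : Fin k, Fin (n i) := fun i => ⟨0, hn i⟩ with hz
  obtain ⟨f, hf⟩ : ∃ f : ∀ i : Fin k, Fin (n i) → Fin (n i) → Matrix (Fin N) (Fin N) ℂ,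
      ∀ i a b, f i a b = π (matUnit n i a b) := ⟨_, fun _ _ _ => rfl⟩
  have hf_mul_same : ∀ (i : Fin k) (a b c d : Fin (n i)),
      f i a b * f i c d = if b = c then f i a d else 0 := by
    intro i a b c d
    rw [hf, hf, ← _root_.map_mul π _ _, matUnit_mul_same]
    split_ifs <;> simp [hf]
  have hf_mul_ne : ∀ {i j : Fin k}, i ≠ j → ∀ (a b : Fin (n i)) (c d : Fin (n j)),
      f i a b * f j c d = 0 := by
    intro i j h a b c d
    rw [hf, hf, ← _root_.map_mul π _ _, matUnit_mul_ne h]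
    simp
  have hf_star : ∀ (i : Fin k) (a b : Fin (n i)), (f i a b)ᴴ = f i b a := by
    intro i a b
    rw [hf, hf, ← Matrix.star_eq_conjTranspose, ← map_star, matUnit_star]
  have hf_sum : ∑ i, ∑ a, f i a a = 1 := by
    simp only [hf, ← map_sum]
    rw [matUnit_sum, _root_.map_one π]
  -- the projections and their ranges
  set P : Fin k → Matrix (Fin N) (Fin N) ℂ := fun i => f i (z i) (z i) with hP
  set V : Fin k → Submodule ℂ (EuclideanSpace ℂ (Fin N)) :=
    fun i => LinearMap.range (Matrix.toEuclideanLin (P i)) with hV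
  set m : Fin k → ℕ := fun i => Module.finrank ℂ (V i) with hm'
  have hPP : ∀ i, P i * P i = P i := by
    intro i
    simp [hP, hf_mul_same]
  have hPmem : ∀ (i : Fin k) (w : EuclideanSpace ℂ (Fin N)), w ∈ V i →
      Matrix.toEuclideanLin (P i) w = w := by
    rintro i w ⟨v, rfl⟩
    rw [← LinearMap.comp_apply, ← tl_mul, hPP]
  have hm : ∀ i, 0 < m i := by
    intro i
    refine Nat.pos_of_ne_zero fun h0 => matUnit_ne_zero i (z i) (z i) ?_
    have hbot : V i = ⊥ := Submodule.finrank_eq_zero.mp h0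
    have htl : Matrix.toEuclideanLin (P i) = 0 := LinearMap.range_eq_bot.mp hbot
    have hP0 : P i = 0 := Matrix.toEuclideanLin.injective (by rw [htl, map_zero])
    exact hinj (by rw [_root_.map_zero π, ← hf i (z i) (z i)]; exact hP0)
  set B : ∀ i, OrthonormalBasis (Fin (m i)) ℂ (V i) := fun i => stdOrthonormalBasis ℂ (V i)
    with hB
  set u : (Σ i : Fin k, Fin (n i) × Fin (m i)) → EuclideanSpace ℂ (Fin N) :=
    fun σ => Matrix.toEuclideanLin (f σ.1 σ.2.1 (z σ.1)) (B σ.1 σ.2.2 : EuclideanSpace ℂ (Fin N))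
    with hu
  have hu_inner : ∀ σ τ, inner (𝕜 := ℂ) (u σ) (u τ) = if σ = τ then 1 else 0 := by
    rintro ⟨i, a, t⟩ ⟨j, b, s⟩
    have key : inner (𝕜 := ℂ) (u ⟨i, (a, t)⟩) (u ⟨j, (b, s)⟩)
        = inner (𝕜 := ℂ) ((B i t : EuclideanSpace ℂ (Fin N)))
            (Matrix.toEuclideanLin (f i (z i) a * f j b (z j))
              (B j s : EuclideanSpace ℂ (Fin N))) := by
      rw [hu]
      rw [inner_tl_left, hf_star, tl_mul]
      rfl
    rcases eq_or_ne i j with rfl | hij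
    · rcases eq_or_ne a b with rfl | hab
      · rw [key, hf_mul_same, if_pos rfl]
        rw [hPmem i _ (B i s).2, ← Submodule.coe_inner,
          orthonormal_iff_ite.mp (B i).orthonormal]
        simp [Sigma.mk.inj_iff]
      · rw [key, hf_mul_same, if_neg hab]
        simp [Sigma.mk.inj_iff, hab]
    · rw [key, hf_mul_ne hij]
      simp [Sigma.mk.inj_iff, hij]
  have horth : Orthonormal ℂ u := orthonormal_iff_ite.2 hu_inner
  have hu_span : ⊤ ≤ Submodule.span ℂ (Set.range u) := by
    intro y _
    have hy : y = ∑ i, ∑ a, Matrix.toEuclideanLin (f i a a) y := by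
      have h2 : Matrix.toEuclideanLin (∑ i, ∑ a, f i a a) y
          = ∑ i, ∑ a, Matrix.toEuclideanLin (f i a a) y := by
        simp [_root_.map_sum, LinearMap.sum_apply]
      rw [← h2, hf_sum, tl_one, LinearMap.id_apply]
    rw [hy]
    refine Submodule.sum_mem _ fun i _ => Submodule.sum_mem _ fun a _ => ?_
    have hfa : f i a a = f i a (z i) * f i (z i) a := by rw [hf_mul_same, if_pos rfl]
    have hPf : f i (z i) a = P i * f i (z i) a := by
      rw [hP]
      rw [hf_mul_same, if_pos rfl]
    have hwV : Matrix.toEuclideanLin (f i (z i) a) y ∈ V i :=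
      ⟨Matrix.toEuclideanLin (f i (z i) a) y, by
        rw [← LinearMap.comp_apply, ← tl_mul, ← hPf]⟩
    have hrepr : (∑ t, (B i).repr ⟨_, hwV⟩ t • (B i t : EuclideanSpace ℂ (Fin N)))
        = Matrix.toEuclideanLin (f i (z i) a) y := by
      have h2 := (B i).sum_repr ⟨_, hwV⟩
      have h3 := congrArg (Subtype.val) h2
      simp only [AddSubmonoidClass.coe_finset_sum, SetLike.val_smul] at h3
      exact h3
    have hsum : Matrix.toEuclideanLin (f i a a) y
        = ∑ t, (B i).repr ⟨_, hwV⟩ t • u ⟨i, (a, t)⟩ := by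
      rw [hfa, tl_mul, LinearMap.comp_apply]
      conv_lhs => rw [← hrepr]
      rw [map_sum]
      simp only [_root_.map_smul, hu]
    rw [hsum]
    exact Submodule.sum_mem _ fun t _ =>
      Submodule.smul_mem _ _ (Submodule.subset_span ⟨⟨i, (a, t)⟩, rfl⟩)
  have hact : ∀ (x : ∀ i : Fin k, Matrix (Fin (n i)) (Fin (n i)) ℂ) (i : Fin k)
      (a : Fin (n i)) (t : Fin (m i)),
      Matrix.toEuclideanLin (π x) (u ⟨i, (a, t)⟩) = ∑ b, x i b a • u ⟨i, (b, t)⟩ := by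
    intro x i a t
    have hxE : π x * f i a (z i) = ∑ b, x i b a • f i b (z i) := by
      rw [hf, ← _root_.map_mul π, mul_matUnit]
      simp [hf]
    have h1 : Matrix.toEuclideanLin (π x) (u ⟨i, (a, t)⟩)
        = Matrix.toEuclideanLin (π x * f i a (z i)) (B i t : EuclideanSpace ℂ (Fin N)) := by
      rw [tl_mul]
      rfl
    rw [h1, hxE, map_sum]
    simp [hu]
  set onb : OrthonormalBasis (Σ i : Fin k, Fin (n i) × Fin (m i)) ℂ (EuclideanSpace ℂ (Fin N)) :=
    OrthonormalBasis.mk horth hu_span with honb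
  have hcard : Fintype.card (Σ i : Fin k, Fin (n i) × Fin (m i)) = N := by
    rw [← finrank_euclideanSpace_fin (𝕜 := ℂ) (n := N),
      Module.finrank_eq_card_basis onb.toBasis]
  set e : Fin N ≃ (Σ i : Fin k, Fin (n i) × Fin (m i)) :=
    (Fintype.equivFinOfCardEq hcard).symm with he
  set U : Matrix (Fin N) (Fin N) ℂ := Matrix.of (fun j l => u (e l) j) with hU
  have hUU : Uᴴ * U = 1 := by
    have hsum : ∀ σ τ, ∑ j, (starRingEnd ℂ) (u σ j) * u τ j = if σ = τ then 1 else 0 := by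
      intro σ τ
      have := hu_inner σ τ
      rw [PiLp.inner_apply] at this
      simpa [RCLike.inner_apply, mul_comm] using this
    ext l l'
    rw [Matrix.mul_apply]
    simp only [Matrix.conjTranspose_apply, hU, Matrix.of_apply, RCLike.star_def]
    rw [hsum, Matrix.one_apply]
    simp [e.injective.eq_iff]
  have hUU' : U * Uᴴ = 1 := mul_eq_one_comm.2 hUU
  refine ⟨m, hm, ?_, e, U, hUU', hUU, ?_⟩
  · rw [← hcard]
    simp [Fintype.card_sigma]
  · intro x
    have key : ∀ (σ : Σ i : Fin k, Fin (n i) × Fin (m i)) (j : Fin N),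
        Matrix.toEuclideanLin (π x) (u σ) j
          = ∑ τ, u τ j * (Matrix.blockDiagonal'
              (fun i => (x i) ⊗ₖ (1 : Matrix (Fin (m i)) (Fin (m i)) ℂ))) τ σ := by
      rintro ⟨i, a, t⟩ j
      rw [hact, ← Finset.univ_sigma_univ, Finset.sum_sigma]
      rw [Finset.sum_eq_single i]
      · rw [Fintype.sum_prod_type]
        have hterm : ∀ (b : Fin (n i)) (s : Fin (m i)),
            u ⟨i, (b, s)⟩ j * (Matrix.blockDiagonal'
              (fun i => (x i) ⊗ₖ (1 : Matrix (Fin (m i)) (Fin (m i)) ℂ))) ⟨i, (b, s)⟩ ⟨i, (a, t)⟩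
              = if s = t then x i b a * u ⟨i, (b, s)⟩ j else 0 := by
          intro b s
          rw [Matrix.blockDiagonal'_apply_eq, Matrix.kroneckerMap_apply, Matrix.one_apply]
          split_ifs <;> ring
        rw [Finset.sum_congr rfl fun b _ => Finset.sum_congr rfl fun s _ => hterm b s]
        rw [Finset.sum_congr rfl fun b _ =>
          Finset.sum_ite_eq' Finset.univ t (fun s => x i b a * u ⟨i, (b, s)⟩ j)]
        rw [esum_apply]
        simp only [Finset.mem_univ, if_true, esmul_apply]
      · intro i' _ hne
        simp [Matrix.blockDiagonal'_apply_ne _ _ _ hne]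
      · simp
    have hcomm : π x * U = U * (Matrix.blockDiagonal'
        (fun i => (x i) ⊗ₖ (1 : Matrix (Fin (m i)) (Fin (m i)) ℂ))).submatrix e e := by
      ext j l
      have hl : (π x * U) j l = Matrix.toEuclideanLin (π x) (u (e l)) j := by
        rw [Matrix.mul_apply, tl_mulVec]
        simp [hU, Matrix.mulVec, dotProduct]
      rw [hl, key]
      rw [Matrix.mul_apply]
      simp only [Matrix.submatrix_apply, hU, Matrix.of_apply]
      exact (Equiv.sum_comp e (fun τ => u τ j * (Matrix.blockDiagonal'
        (fun i => (x i) ⊗ₖ (1 : Matrix (Fin (m i)) (Fin (m i)) ℂ))) τ (e l))).symm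
    calc π x = π x * (U * Uᴴ) := by rw [hUU', Matrix.mul_one]
      _ = (π x * U) * Uᴴ := by rw [Matrix.mul_assoc]
      _ = _ := by rw [hcomm, Matrix.mul_assoc, ← Matrix.mul_assoc]
end

section
/- (Schrödinger's mixture theorem, forward direction.) Let ρ be an n×n complex density matrix with eigenvalues λ₁,…,λ_n (listed with multiplicity, with respect to an orthonormal eigenbasis). Suppose ρ = Σ_{i=1}^{m} |ψ_i⟩⟨ψ_i| for vectors ψ₁,…,ψ_m ∈ ℂⁿ with m ≥ n, and set p_i = ‖ψ_i‖². Then there exists an m×m unitary matrix U such that p_i = Σ_{j=1}^{m} |U_{ij}|² · λ̃_j for all i, where λ̃_j = λ_j for j ≤ n and λ̃_j = 0 for j > n. -/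
open Matrix
open scoped ComplexOrder

/-- **Schrödinger's mixture theorem, forward direction.**  If a density matrix `ρ` with
eigenvalues `hρ.1.eigenvalues` (listed with multiplicity) is decomposed as
`ρ = Σ_{i=1}^m |ψ_i⟩⟨ψ_i|` with `m ≥ n`, and `p i = ‖ψ i‖²`, then there is an `m × m`
unitary `U` with `p i = Σ_j |U i j|² · lam j`, where `lam` is the eigenvalue list padded
with zeros. -/
theorem schroedinger_mixture_forward
    (n m : ℕ) (hm : n ≤ m)
    (ρ : Matrix (Fin n) (Fin n) ℂ) (hρ : ρ.PosSemidef) (htr : ρ.trace = 1)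
    (ψ : Fin m → (Fin n → ℂ))
    (hdecomp : ρ = ∑ i, Matrix.vecMulVec (ψ i) (star (ψ i)))
    (p : Fin m → ℝ) (hp : ∀ i, p i = ∑ a, ‖ψ i a‖ ^ 2)
    (lam : Fin m → ℝ)
    (hlam : ∀ j : Fin m, lam j = if h : (j : ℕ) < n then hρ.1.eigenvalues ⟨j, h⟩ else 0) :
    ∃ U : Matrix (Fin m) (Fin m) ℂ, U * Uᴴ = 1 ∧ Uᴴ * U = 1 ∧
      ∀ i, p i = ∑ j, ‖U i j‖ ^ 2 * lam j := by
  classical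
  have hherm := hρ.1
  set e : Fin n → Fin n → ℂ := fun j => ⇑(hherm.eigenvectorBasis j) with he
  set μ : Fin n → ℝ := hherm.eigenvalues with hμ
  have hμ0 : ∀ j, 0 ≤ μ j := fun j => hρ.eigenvalues_nonneg j
  have horth : ∀ j k, ∑ a, (starRingEnd ℂ) (e j a) * e k a = if j = k then 1 else 0 := by
    intro j k
    have h2 := (orthonormal_iff_ite.mp hherm.eigenvectorBasis.orthonormal) j k
    simp [PiLp.inner_apply, RCLike.inner_apply] at h2
    rw [← h2]; exact Finset.sum_congr rfl fun a _ => mul_comm _ _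
  have hrow : ∀ a b, ∑ j, e j a * (starRingEnd ℂ) (e j b) = if a = b then 1 else 0 := by
    intro a b
    have hU := mem_unitaryGroup_iff.mp hherm.eigenvectorUnitary.2
    have h3 := congrFun (congrFun hU a) b
    simp only [Matrix.mul_apply, Matrix.one_apply, Matrix.star_apply,
      Matrix.conjTranspose_apply] at h3
    simpa using h3
  set c : Fin n → Fin m → ℂ := fun j i => ∑ a, (starRingEnd ℂ) (e j a) * ψ i a with hc
  have hρent : ∀ a b, ρ a b = ∑ i, ψ i a * (starRingEnd ℂ) (ψ i b) := by
    intro a b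
    rw [hdecomp]
    simp [Matrix.sum_apply, vecMulVec_apply, Pi.star_apply, RCLike.star_def]
  have hkey : ∀ j k, ∑ i, (starRingEnd ℂ) (c j i) * c k i
      = if j = k then (μ j : ℂ) else 0 := by
    intro j k
    have heig := hherm.mulVec_eigenvectorBasis k
    calc ∑ i, (starRingEnd ℂ) (c j i) * c k i
        = ∑ i, (∑ a, e j a * (starRingEnd ℂ) (ψ i a)) * (∑ b, (starRingEnd ℂ) (e k b) * ψ i b) := by
          refine Finset.sum_congr rfl fun i _ => ?_
          simp [hc, map_sum, mul_comm]
      _ = ∑ i, ∑ a, ∑ b, (e j a * (starRingEnd ℂ) (ψ i a)) * ((starRingEnd ℂ) (e k b) * ψ i b) := by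
          refine Finset.sum_congr rfl fun i _ => ?_
          rw [Finset.sum_mul_sum]
      _ = ∑ a, ∑ b, e j a * (starRingEnd ℂ) (e k b) * (∑ i, ψ i b * (starRingEnd ℂ) (ψ i a)) := by
          rw [Finset.sum_comm]
          refine Finset.sum_congr rfl fun a _ => ?_
          rw [Finset.sum_comm]
          refine Finset.sum_congr rfl fun b _ => ?_
          rw [Finset.mul_sum]
          refine Finset.sum_congr rfl fun i _ => ?_
          ring
      _ = ∑ a, ∑ b, e j a * (starRingEnd ℂ) (e k b) * ρ b a := by
          simp only [hρent]
      _ = ∑ a, e j a * (starRingEnd ℂ) ((ρ *ᵥ e k) a) := by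
          refine Finset.sum_congr rfl fun a _ => ?_
          simp only [mulVec, dotProduct, map_sum, _root_.map_mul, Finset.mul_sum]
          refine Finset.sum_congr rfl fun b _ => ?_
          rw [show (starRingEnd ℂ) (ρ a b) = ρ b a from hherm.apply b a]
          ring
      _ = ∑ a, e j a * ((μ k : ℂ) * (starRingEnd ℂ) (e k a)) := by
          refine Finset.sum_congr rfl fun a _ => ?_
          have h5 : (ρ *ᵥ e k) a = (μ k : ℂ) * e k a := by
            rw [heig]; simp [he, hμ, Complex.real_smul]
          rw [h5, _root_.map_mul, Complex.conj_ofReal]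
      _ = (μ k : ℂ) * ∑ a, (starRingEnd ℂ) (e k a) * e j a := by
          rw [Finset.mul_sum]
          refine Finset.sum_congr rfl fun a _ => ?_
          ring
      _ = if j = k then (μ j : ℂ) else 0 := by
          rw [horth]
          by_cases h : j = k <;> simp [h, eq_comm]
  -- real version for j = k
  have hkeyR : ∀ j, ∑ i, ‖c j i‖ ^ 2 = μ j := by
    intro j
    have := hkey j j
    rw [if_pos rfl] at this
    have h2 : ((∑ i, ‖c j i‖ ^ 2 : ℝ) : ℂ) = ((μ j : ℝ) : ℂ) := by
      push_cast
      rw [← this]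
      refine Finset.sum_congr rfl fun i _ => ?_
      rw [RCLike.conj_mul]
      norm_cast
    exact_mod_cast h2
  have hczero : ∀ j, μ j = 0 → ∀ i, c j i = 0 := by
    intro j hj i
    have hsum := hkeyR j
    rw [hj] at hsum
    have h4 := (Finset.sum_eq_zero_iff_of_nonneg (fun i _ => by positivity)).mp hsum i
      (Finset.mem_univ i)
    have h5 : ‖c j i‖ = 0 := by
      have := (pow_eq_zero_iff two_ne_zero).mp h4
      simpa using this
    simpa using h5
  -- Parseval
  have hpars : ∀ i, ∑ a, ‖ψ i a‖ ^ 2 = ∑ j, ‖c j i‖ ^ 2 := by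
    intro i
    have hC : ((∑ j, ‖c j i‖ ^ 2 : ℝ) : ℂ) = ((∑ a, ‖ψ i a‖ ^ 2 : ℝ) : ℂ) := by
      push_cast
      have : ∀ z : ℂ, (‖z‖:ℂ) ^ 2 = (starRingEnd ℂ) z * z := fun z => (RCLike.conj_mul z).symm
      calc (∑ j, (‖c j i‖:ℂ) ^ 2) = ∑ j, (starRingEnd ℂ) (c j i) * c j i := by
            refine Finset.sum_congr rfl fun j _ => ?_
            rw [RCLike.conj_mul]
            norm_cast
        _ = ∑ j, (∑ a, e j a * (starRingEnd ℂ) (ψ i a)) * (∑ b, (starRingEnd ℂ) (e j b) * ψ i b) := by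
            refine Finset.sum_congr rfl fun j _ => ?_
            simp [hc, map_sum, mul_comm]
        _ = ∑ j, ∑ a, ∑ b, (e j a * (starRingEnd ℂ) (ψ i a)) * ((starRingEnd ℂ) (e j b) * ψ i b) := by
            refine Finset.sum_congr rfl fun j _ => ?_
            rw [Finset.sum_mul_sum]
        _ = ∑ a, ∑ b, ((starRingEnd ℂ) (ψ i a) * ψ i b) * (∑ j, e j a * (starRingEnd ℂ) (e j b)) := by
            rw [Finset.sum_comm]
            refine Finset.sum_congr rfl fun a _ => ?_
            rw [Finset.sum_comm]
            refine Finset.sum_congr rfl fun b _ => ?_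
            rw [Finset.mul_sum]
            refine Finset.sum_congr rfl fun j _ => ?_
            ring
        _ = ∑ a, (starRingEnd ℂ) (ψ i a) * ψ i a := by
            refine Finset.sum_congr rfl fun a _ => ?_
            rw [Finset.sum_eq_single a]
            · rw [hrow, if_pos rfl, mul_one]
            · intro b _ hb
              rw [hrow, if_neg (Ne.symm hb), mul_zero]
            · intro h; exact absurd (Finset.mem_univ a) h
        _ = ∑ a, (‖ψ i a‖:ℂ) ^ 2 := by
            refine Finset.sum_congr rfl fun a _ => ?_
            rw [RCLike.conj_mul]
            norm_cast
    exact_mod_cast hC.symm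
  -- build the orthonormal family
  set s : Set (Fin m) := {j | ∃ h : (j : ℕ) < n, μ ⟨(j : ℕ), h⟩ ≠ 0} with hs
  set v : Fin m → EuclideanSpace ℂ (Fin m) := fun j =>
    if h : (j : ℕ) < n then WithLp.toLp 2 (fun i => ((Real.sqrt (μ ⟨(j : ℕ), h⟩) : ℂ))⁻¹ * c ⟨(j : ℕ), h⟩ i) else 0
    with hv
  have hvon : Orthonormal ℂ (s.restrict v) := by
    rw [orthonormal_iff_ite]
    rintro ⟨j, hjn, hjμ⟩ ⟨k, hkn, hkμ⟩
    have hjpos : 0 < μ ⟨(j : ℕ), hjn⟩ := lt_of_le_of_ne (hμ0 _) (Ne.symm hjμ)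
    have hkpos : 0 < μ ⟨(k : ℕ), hkn⟩ := lt_of_le_of_ne (hμ0 _) (Ne.symm hkμ)
    simp only [Set.restrict_apply, hv, dif_pos hjn, dif_pos hkn]
    rw [PiLp.inner_apply]
    simp only [RCLike.inner_apply, WithLp.ofLp_toLp]
    simp only [Set.restrict, Set.domRestrict, dif_pos hjn, dif_pos hkn, WithLp.ofLp_toLp]
    have : ∀ i : Fin m, (starRingEnd ℂ) (((Real.sqrt (μ ⟨(j : ℕ), hjn⟩) : ℂ))⁻¹ * c ⟨(j : ℕ), hjn⟩ i)
        * (((Real.sqrt (μ ⟨(k : ℕ), hkn⟩) : ℂ))⁻¹ * c ⟨(k : ℕ), hkn⟩ i)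
        = ((Real.sqrt (μ ⟨(j : ℕ), hjn⟩) : ℂ))⁻¹ * ((Real.sqrt (μ ⟨(k : ℕ), hkn⟩) : ℂ))⁻¹
          * ((starRingEnd ℂ) (c ⟨(j : ℕ), hjn⟩ i) * c ⟨(k : ℕ), hkn⟩ i) := by
      intro i
      rw [_root_.map_mul, map_inv₀, Complex.conj_ofReal]
      ring
    rw [Finset.sum_congr rfl fun i _ => (mul_comm _ _).trans (this i), ← Finset.mul_sum, hkey]
    by_cases h : (⟨j, hjn, hjμ⟩ : s) = ⟨k, hkn, hkμ⟩
    · have hjk : j = k := Subtype.mk_eq_mk.mp h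
      subst hjk
      rw [if_pos rfl, if_pos rfl]
      have hsq : ((Real.sqrt (μ ⟨(j : ℕ), hjn⟩) : ℝ) : ℂ) * ((Real.sqrt (μ ⟨(j : ℕ), hjn⟩) : ℝ) : ℂ)
          = ((μ ⟨(j : ℕ), hjn⟩ : ℝ) : ℂ) := by
        rw [← Complex.ofReal_mul, Real.mul_self_sqrt hjpos.le]
      have : ((Real.sqrt (μ ⟨(j : ℕ), hjn⟩) : ℂ))⁻¹ * ((Real.sqrt (μ ⟨(j : ℕ), hjn⟩) : ℂ))⁻¹
          * (μ ⟨(j : ℕ), hjn⟩ : ℂ) = 1 := by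
        rw [← mul_inv, hsq, inv_mul_cancel₀ (Complex.ofReal_ne_zero.mpr hjμ)]
      simpa using this
    · have hjk : j ≠ k := fun hh => h (Subtype.ext hh)
      have : (⟨(j : ℕ), hjn⟩ : Fin n) ≠ ⟨(k : ℕ), hkn⟩ := by
        intro hh
        exact hjk (Fin.ext (by simpa using congrArg Fin.val hh))
      rw [if_neg this, if_neg h, mul_zero]
  obtain ⟨b, hb⟩ := hvon.exists_orthonormalBasis_extension_of_card_eq
    (by simp) (v := v)
  have hUtU : (Matrix.of (fun i j => b j i))ᴴ * (Matrix.of (fun i j => b j i)) = 1 := by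
    ext j k
    rw [Matrix.mul_apply, Matrix.one_apply]
    simp only [Matrix.conjTranspose_apply, Matrix.of_apply, RCLike.star_def]
    have h2 := (orthonormal_iff_ite.mp b.orthonormal) j k
    simp [PiLp.inner_apply, RCLike.inner_apply] at h2
    rw [← h2]; exact Finset.sum_congr rfl fun a _ => mul_comm _ _
  refine ⟨Matrix.of (fun i j => b j i), mul_eq_one_comm.mp hUtU, hUtU, ?_⟩
  intro i
  rw [hp i, hpars i]
  have hterm : ∀ j : Fin m, ‖(Matrix.of fun i j => b j i) i j‖ ^ 2 * lam j
      = if h : (j : ℕ) < n then ‖c ⟨(j : ℕ), h⟩ i‖ ^ 2 else 0 := by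
    intro j
    by_cases h : (j : ℕ) < n
    · rw [dif_pos h]
      by_cases h2 : μ ⟨(j : ℕ), h⟩ = 0
      · rw [hlam j, dif_pos h, h2, mul_zero, hczero _ h2 i]
        simp
      · have hjs : j ∈ s := ⟨h, h2⟩
        have hbj := hb j hjs
        have hpos : 0 < μ ⟨(j : ℕ), h⟩ := lt_of_le_of_ne (hμ0 _) (Ne.symm h2)
        have hbji : b j i = ((Real.sqrt (μ ⟨(j : ℕ), h⟩) : ℂ))⁻¹ * c ⟨(j : ℕ), h⟩ i := by
          rw [hbj]
          simp only [hv]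
          rw [dif_pos h, WithLp.ofLp_toLp]
        rw [Matrix.of_apply, hbji, hlam j, dif_pos h]
        rw [norm_mul, mul_pow, norm_inv]
        have hn2 : ‖((Real.sqrt (μ ⟨(j : ℕ), h⟩) : ℝ) : ℂ)‖ = Real.sqrt (μ ⟨(j : ℕ), h⟩) := by
          rw [Complex.norm_real]
          exact abs_of_nonneg (Real.sqrt_nonneg _)
        rw [hn2, inv_pow, Real.sq_sqrt hpos.le]
        field_simp
    · rw [dif_neg h, hlam j, dif_neg h, mul_zero]
  rw [Finset.sum_congr rfl (fun j _ => hterm j)]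
  set g : ℕ → ℝ := fun t => if h : t < n then ‖c ⟨t, h⟩ i‖ ^ 2 else 0 with hg
  calc ∑ j : Fin n, ‖c j i‖ ^ 2
      = ∑ j : Fin n, g (j : ℕ) := by
        refine Finset.sum_congr rfl fun j _ => ?_
        simp [hg]
    _ = ∑ t ∈ Finset.range n, g t := Fin.sum_univ_eq_sum_range g n
    _ = ∑ t ∈ Finset.range m, g t := by
        refine Finset.sum_subset (Finset.range_subset_range.mpr hm) fun x _ hx => ?_
        simp only [hg]
        exact dif_neg (by simpa using hx)
    _ = ∑ j : Fin m, g (j : ℕ) := (Fin.sum_univ_eq_sum_range g m).symm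
    _ = ∑ j : Fin m, if h : (j : ℕ) < n then ‖c ⟨(j : ℕ), h⟩ i‖ ^ 2 else 0 := rfl
end

section
/- (Schrödinger's mixture theorem, converse direction.) Let ρ be an n×n complex density matrix with eigenvalues λ₁,…,λ_n (listed with multiplicity), let m ≥ n, set λ̃_j = λ_j for j ≤ n and λ̃_j = 0 for j > n, and let U be any m×m unitary matrix. Define p_i = Σ_{j=1}^{m} |U_{ij}|² · λ̃_j. Then there exist vectors ψ₁,…,ψ_m ∈ ℂⁿ with ‖ψ_i‖² = p_i for every i and ρ = Σ_{i=1}^{m} |ψ_i⟩⟨ψ_i|. -/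
open Matrix
open scoped ComplexOrder

private lemma sum_castLE_aux {M : Type*} [AddCommMonoid M] {n m : ℕ} (hm : n ≤ m)
    (f : Fin m → M) (hf : ∀ j : Fin m, ¬ (j : ℕ) < n → f j = 0) :
    ∑ j, f j = ∑ j : Fin n, f (Fin.castLE hm j) := by
  classical
  have h1 : ∑ j : Fin n, f (Fin.castLE hm j)
      = ∑ x ∈ Finset.univ.map (Fin.castLEEmb hm), f x := by
    rw [Finset.sum_map]; rfl
  rw [h1]
  refine (Finset.sum_subset (Finset.subset_univ _) ?_).symm
  intro x _ hx
  apply hf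
  intro hlt
  exact hx (Finset.mem_map.mpr ⟨⟨(x : ℕ), hlt⟩, Finset.mem_univ _, rfl⟩)

/-- **Schrödinger's mixture theorem, converse direction.**  Given a density matrix `ρ`
with eigenvalue list `lam` (padded with zeros to length `m ≥ n`) and any `m × m`
unitary `U`, setting `p i = Σ_j |U i j|² · lam j` there exist vectors `ψ i ∈ ℂⁿ`
with `‖ψ i‖² = p i` and `ρ = Σ_i |ψ_i⟩⟨ψ_i|`. -/
theorem schroedinger_mixture_converse
    (n m : ℕ) (hm : n ≤ m)
    (ρ : Matrix (Fin n) (Fin n) ℂ) (hρ : ρ.PosSemidef) (htr : ρ.trace = 1)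
    (lam : Fin m → ℝ)
    (hlam : ∀ j : Fin m, lam j = if h : (j : ℕ) < n then hρ.1.eigenvalues ⟨j, h⟩ else 0)
    (U : Matrix (Fin m) (Fin m) ℂ) (hU : U * Uᴴ = 1) (hU' : Uᴴ * U = 1)
    (p : Fin m → ℝ) (hp : ∀ i, p i = ∑ j, ‖U i j‖ ^ 2 * lam j) :
    ∃ ψ : Fin m → (Fin n → ℂ),
      (∀ i, ∑ a, ‖ψ i a‖ ^ 2 = p i) ∧
      ρ = ∑ i, Matrix.vecMulVec (ψ i) (star (ψ i)) := by
  classical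
  set V : Matrix (Fin n) (Fin n) ℂ := (hρ.1.eigenvectorUnitary : Matrix (Fin n) (Fin n) ℂ)
    with hVdef
  have hVorth : star V * V = 1 := Unitary.coe_star_mul_self hρ.1.eigenvectorUnitary
  have horth : ∀ j' k' : Fin n,
      ∑ a, V a j' * star (V a k') = if j' = k' then 1 else 0 := by
    intro j' k'
    have h := congrFun (congrFun hVorth k') j'
    rw [Matrix.mul_apply] at h
    simp only [Matrix.star_apply, Matrix.one_apply] at h
    rw [show ((if k' = j' then (1:ℂ) else 0) = if j' = k' then 1 else 0) by
      simp [eq_comm]] at h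
    rw [← h]
    exact Finset.sum_congr rfl fun a _ => mul_comm _ _
  have hlam_nonneg : ∀ j, 0 ≤ lam j := by
    intro j
    rw [hlam j]
    split
    · exact hρ.eigenvalues_nonneg _
    · exact le_refl 0
  set w : Fin m → Fin n → ℂ := fun j a =>
    if h : (j : ℕ) < n then (Real.sqrt (lam j) : ℂ) * V a ⟨(j : ℕ), h⟩ else 0 with hwdef
  have wzero : ∀ j : Fin m, ¬ (j : ℕ) < n → ∀ a, w j a = 0 := by
    intro j hj a
    simp [hwdef, dif_neg hj]
  have lamzero : ∀ j : Fin m, ¬ (j : ℕ) < n → lam j = 0 := by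
    intro j hj
    rw [hlam j, dif_neg hj]
  -- key orthogonality of the w's
  have key : ∀ j k : Fin m, ∑ a, w j a * star (w k a) = if j = k then (lam j : ℂ) else 0 := by
    intro j k
    by_cases hj : (j : ℕ) < n
    · by_cases hk : (k : ℕ) < n
      · have h1 : ∑ a, w j a * star (w k a)
            = (Real.sqrt (lam j) : ℂ) * (Real.sqrt (lam k) : ℂ) *
              ∑ a, V a ⟨(j : ℕ), hj⟩ * star (V a ⟨(k : ℕ), hk⟩) := by
          rw [Finset.mul_sum]
          refine Finset.sum_congr rfl fun a _ => ?_
          simp only [hwdef, dif_pos hj, dif_pos hk, star_mul']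
          rw [show (star ((Real.sqrt (lam k) : ℂ)) = (Real.sqrt (lam k) : ℂ)) from
            Complex.conj_ofReal _]
          ring
        rw [h1, horth]
        by_cases hjk : j = k
        · subst hjk
          rw [if_pos rfl, if_pos rfl, mul_one, ← Complex.ofReal_mul,
            Real.mul_self_sqrt (hlam_nonneg j)]
        · rw [if_neg, if_neg hjk, mul_zero]
          intro h
          exact hjk (Fin.ext (by simpa using congrArg Fin.val h))
      · have hjk : j ≠ k := fun h => hk (h ▸ hj)
        rw [if_neg hjk]
        refine Finset.sum_eq_zero fun a _ => ?_
        rw [wzero k hk a, star_zero, mul_zero]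
    · have h1 : ∑ a, w j a * star (w k a) = 0 :=
        Finset.sum_eq_zero fun a _ => by rw [wzero j hj a, zero_mul]
      rw [h1]
      by_cases hjk : j = k
      · rw [if_pos hjk, lamzero j hj, Complex.ofReal_zero]
      · rw [if_neg hjk]
  -- spectral decomposition of ρ in terms of the w's
  have hrho : ∀ a b, ρ a b = ∑ j, w j a * star (w j b) := by
    intro a b
    have h1 : ρ a b = ∑ j' : Fin n, V a j' * (hρ.1.eigenvalues j' : ℂ) * star (V b j') := by
      conv_lhs => rw [hρ.1.spectral_theorem, Unitary.conjStarAlgAut_apply]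
      rw [Matrix.mul_apply]
      refine Finset.sum_congr rfl fun j' _ => ?_
      rw [Matrix.mul_diagonal]
      simp [hVdef, Matrix.IsHermitian.eigenvectorUnitary_apply, Matrix.star_apply,
        Matrix.conjTranspose_apply, mul_comm, mul_assoc, mul_left_comm]
    rw [h1, sum_castLE_aux hm _ (fun j hj => by rw [wzero j hj a, zero_mul])]
    refine Finset.sum_congr rfl fun j' _ => ?_
    have hj' : ((Fin.castLE hm j' : Fin m) : ℕ) < n := by
      simpa using j'.isLt
    have hmk : (⟨((Fin.castLE hm j' : Fin m) : ℕ), hj'⟩ : Fin n) = j' := Fin.ext rfl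
    have hlamval : lam (Fin.castLE hm j') = hρ.1.eigenvalues j' := by
      rw [hlam, dif_pos hj', hmk]
    simp only [hwdef, dif_pos hj', hmk, star_mul']
    rw [show (star ((Real.sqrt (lam (Fin.castLE hm j')) : ℂ))
        = (Real.sqrt (lam (Fin.castLE hm j')) : ℂ)) from Complex.conj_ofReal _]
    rw [hlamval]
    have hsq : (Real.sqrt (hρ.1.eigenvalues j') : ℂ) * (Real.sqrt (hρ.1.eigenvalues j') : ℂ)
        = (hρ.1.eigenvalues j' : ℂ) := by
      rw [← Complex.ofReal_mul, Real.mul_self_sqrt (hρ.eigenvalues_nonneg j')]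
    calc V a j' * (hρ.1.eigenvalues j' : ℂ) * star (V b j')
        = (Real.sqrt (hρ.1.eigenvalues j') : ℂ) * (Real.sqrt (hρ.1.eigenvalues j') : ℂ)
            * (V a j' * star (V b j')) := by rw [hsq]; ring
      _ = (Real.sqrt (hρ.1.eigenvalues j') : ℂ) * V a j' *
            ((Real.sqrt (hρ.1.eigenvalues j') : ℂ) * star (V b j')) := by ring
  -- define ψ
  refine ⟨fun i a => ∑ j, U i j * w j a, ?_, ?_⟩
  · intro i
    have hstar : ∀ i b, star (∑ j, U i j * w j b) = ∑ k, star (U i k) * star (w k b) := by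
      intro i b
      rw [star_sum]
      exact Finset.sum_congr rfl fun k _ => by rw [star_mul']
    have h2 : ∑ a, (∑ j, U i j * w j a) * star (∑ j, U i j * w j a)
        = ∑ j, (U i j * star (U i j)) * (lam j : ℂ) := by
      calc ∑ a, (∑ j, U i j * w j a) * star (∑ j, U i j * w j a)
          = ∑ a, ∑ j, ∑ k, (U i j * star (U i k)) * (w j a * star (w k a)) := by
            refine Finset.sum_congr rfl fun a _ => ?_
            rw [hstar, Finset.sum_mul_sum]
            exact Finset.sum_congr rfl fun j _ => Finset.sum_congr rfl fun k _ => by ring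
        _ = ∑ j, ∑ k, ∑ a, (U i j * star (U i k)) * (w j a * star (w k a)) := by
            rw [Finset.sum_comm]
            exact Finset.sum_congr rfl fun j _ => Finset.sum_comm
        _ = ∑ j, ∑ k, (U i j * star (U i k)) * ∑ a, (w j a * star (w k a)) := by
            refine Finset.sum_congr rfl fun j _ => Finset.sum_congr rfl fun k _ => ?_
            rw [Finset.mul_sum]
        _ = ∑ j, (U i j * star (U i j)) * (lam j : ℂ) := by
            refine Finset.sum_congr rfl fun j _ => ?_
            rw [show (∑ k, (U i j * star (U i k)) * ∑ a, (w j a * star (w k a)))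
                = ∑ k, if j = k then (U i j * star (U i k)) * (lam j : ℂ) else 0 from
              Finset.sum_congr rfl fun k _ => by rw [key j k]; split <;> simp]
            rw [Finset.sum_ite_eq]
            simp
    have hc : ((∑ a, ‖(∑ j, U i j * w j a)‖ ^ 2 : ℝ) : ℂ)
        = ∑ a, (∑ j, U i j * w j a) * star (∑ j, U i j * w j a) := by
      push_cast
      exact Finset.sum_congr rfl fun a _ => (RCLike.mul_conj _).symm
    have hpc : ((p i : ℝ) : ℂ) = ∑ j, (U i j * star (U i j)) * (lam j : ℂ) := by
      rw [hp i]
      push_cast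
      refine Finset.sum_congr rfl fun j _ => ?_
      rw [show U i j * star (U i j) = ((‖U i j‖ : ℂ)) ^ 2 from RCLike.mul_conj _]
    have := hc.trans (h2.trans hpc.symm)
    exact_mod_cast this
  · ext a b
    rw [hrho a b]
    simp only [Matrix.sum_apply, Matrix.vecMulVec_apply, Pi.star_apply]
    have hstar : ∀ i, star (∑ j, U i j * w j b) = ∑ k, star (U i k) * star (w k b) := by
      intro i
      rw [star_sum]
      exact Finset.sum_congr rfl fun k _ => by rw [star_mul']
    have hUcol : ∀ j k : Fin m, ∑ i, U i j * star (U i k) = if k = j then 1 else 0 := by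
      intro j k
      have h := congrFun (congrFun hU' k) j
      rw [Matrix.mul_apply] at h
      simp only [Matrix.conjTranspose_apply, Matrix.one_apply] at h
      rw [← h]
      exact Finset.sum_congr rfl fun i _ => by ring
    symm
    calc ∑ i, (∑ j, U i j * w j a) * star (∑ j, U i j * w j b)
        = ∑ i, ∑ j, ∑ k, (U i j * star (U i k)) * (w j a * star (w k b)) := by
          refine Finset.sum_congr rfl fun i _ => ?_
          rw [hstar, Finset.sum_mul_sum]
          exact Finset.sum_congr rfl fun j _ => Finset.sum_congr rfl fun k _ => by ring
      _ = ∑ j, ∑ k, (∑ i, U i j * star (U i k)) * (w j a * star (w k b)) := by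
          rw [Finset.sum_comm]
          refine Finset.sum_congr rfl fun j _ => ?_
          rw [Finset.sum_comm]
          refine Finset.sum_congr rfl fun k _ => ?_
          rw [Finset.sum_mul]
      _ = ∑ j, w j a * star (w j b) := by
          refine Finset.sum_congr rfl fun j _ => ?_
          rw [show (∑ k, (∑ i, U i j * star (U i k)) * (w j a * star (w k b)))
              = ∑ k, if k = j then w j a * star (w k b) else 0 from
            Finset.sum_congr rfl fun k _ => by rw [hUcol j k]; split <;> simp]
          rw [Finset.sum_ite_eq']
          simp
end

section
/- Let ρ be an n×n complex density matrix and suppose ρ = Σ_{i=1}^{m} p_i |φ_i⟩⟨φ_i| where (p₁,…,p_m) is a probability vector and each φ_i ∈ ℂⁿ is a unit vector. Then H(p) ≥ S_VN(ρ), i.e. the Shannon entropy of the weights of any decomposition of ρ into pure (rank-one) states is at least the von Neumann entropy of ρ. -/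
open Matrix
open scoped ComplexOrder

/-- Jensen's inequality for `Real.negMulLog` with sub-probability weights. -/
lemma negMulLog_jensen_sub {ι : Type*} (s : Finset ι) (w x : ι → ℝ)
    (hw : ∀ k ∈ s, 0 ≤ w k) (hx : ∀ k ∈ s, 0 ≤ x k) (hs : ∑ k ∈ s, w k ≤ 1) :
    ∑ k ∈ s, w k * Real.negMulLog (x k) ≤ Real.negMulLog (∑ k ∈ s, w k * x k) := by
  set t := ∑ k ∈ s, w k with ht
  rcases eq_or_lt_of_le (Finset.sum_nonneg hw) with h0 | h0
  · have hz : ∀ k ∈ s, w k = 0 := by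
      intro k hk
      exact (Finset.sum_eq_zero_iff_of_nonneg hw).mp h0.symm k hk
    have e1 : ∑ k ∈ s, w k * Real.negMulLog (x k) = 0 :=
      Finset.sum_eq_zero fun k hk => by rw [hz k hk, zero_mul]
    have e2 : ∑ k ∈ s, w k * x k = 0 :=
      Finset.sum_eq_zero fun k hk => by rw [hz k hk, zero_mul]
    rw [e1, e2]; simp
  · set y := ∑ k ∈ s, w k * x k with hy
    have hy0 : 0 ≤ y := Finset.sum_nonneg fun k hk => mul_nonneg (hw k hk) (hx k hk)
    have hjen : ∑ k ∈ s, (w k / t) * Real.negMulLog (x k)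
        ≤ Real.negMulLog (∑ k ∈ s, (w k / t) * x k) := by
      refine Real.concaveOn_negMulLog.le_map_sum (fun k hk => div_nonneg (hw k hk) h0.le) ?_
        (fun k hk => hx k hk)
      rw [← Finset.sum_div, div_self h0.ne']
    have hsum : ∑ k ∈ s, (w k / t) * x k = y / t := by
      rw [hy, Finset.sum_div]
      exact Finset.sum_congr rfl fun k _ => by ring
    rw [hsum] at hjen
    have h1 : ∑ k ∈ s, w k * Real.negMulLog (x k)
        = t * ∑ k ∈ s, (w k / t) * Real.negMulLog (x k) := by
      rw [Finset.mul_sum]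
      exact Finset.sum_congr rfl fun k _ => by have ht0 : t ≠ 0 := h0.ne'; field_simp
    rw [h1]
    have h2 : t * Real.negMulLog (y / t) ≤ Real.negMulLog y := by
      rcases eq_or_lt_of_le hy0 with hy0' | hy0'
      · rw [← hy0', zero_div]; simp
      · rw [Real.negMulLog, Real.negMulLog, Real.log_div hy0'.ne' h0.ne']
        have h3 : t * (-(y / t) * (Real.log y - Real.log t))
            = -y * Real.log y + y * Real.log t := by
          have ht0 : t ≠ 0 := h0.ne'
          have htt : t * (y / t) = y := by field_simp
          rw [neg_mul, mul_neg, ← mul_assoc, htt]; ring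
        rw [h3]
        have h4 : y * Real.log t ≤ 0 :=
          mul_nonpos_of_nonneg_of_nonpos hy0 (Real.log_nonpos h0.le hs)
        linarith
    calc t * ∑ k ∈ s, (w k / t) * Real.negMulLog (x k) ≤ t * Real.negMulLog (y / t) :=
          mul_le_mul_of_nonneg_left hjen h0.le
      _ ≤ Real.negMulLog y := h2

/-- The Shannon entropy `H(p) = −Σ_i p_i log p_i` (with `0·log 0 = 0`,
which holds since `Real.log 0 = 0`). -/
noncomputable def shannonEntropy {m : ℕ} (p : Fin m → ℝ) : ℝ :=
  -∑ i, p i * Real.log (p i)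

open scoped Classical in
/-- The von Neumann entropy `S_VN(ρ) = −Σ_i λ_i log λ_i`, where `λ_i` are the
eigenvalues of the (Hermitian) matrix `ρ` listed with multiplicity. -/
noncomputable def vonNeumannEntropy {ι : Type*} [Fintype ι] [DecidableEq ι]
    (ρ : Matrix ι ι ℂ) : ℝ :=
  if h : ρ.IsHermitian then -∑ i, h.eigenvalues i * Real.log (h.eigenvalues i) else 0

/-- The Shannon entropy of the weights of any decomposition of a density matrix `ρ`
into pure (rank-one) states is at least the von Neumann entropy of `ρ`. -/
theorem vonNeumannEntropy_le_shannonEntropy_of_pure_decomposition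
    (n m : ℕ) (ρ : Matrix (Fin n) (Fin n) ℂ) (hρ : ρ.PosSemidef) (htr : ρ.trace = 1)
    (p : Fin m → ℝ) (hp0 : ∀ i, 0 ≤ p i) (hp1 : ∑ i, p i = 1)
    (φ : Fin m → (Fin n → ℂ)) (hφ : ∀ i, ∑ a, ‖φ i a‖ ^ 2 = 1)
    (hdecomp : ρ = ∑ i, (p i : ℂ) • Matrix.vecMulVec (φ i) (star (φ i))) :
    vonNeumannEntropy ρ ≤ shannonEntropy p := by
  classical
  have hherm : ρ.IsHermitian := hρ.1
  set lam : Fin n → ℝ := hherm.eigenvalues with hlamdef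
  set e := hherm.eigenvectorBasis with hedef
  have hlam0 : ∀ k, 0 ≤ lam k := fun k => hρ.eigenvalues_nonneg k
  -- the overlap coefficients
  set u : Fin m → Fin n → ℂ := fun i k => ∑ a, (starRingEnd ℂ) (e k a) * φ i a with hudef
  -- orthonormality of the eigenbasis, concretely
  have hon : ∀ k k', ∑ a, (starRingEnd ℂ) (e k a) * e k' a = if k = k' then 1 else 0 := by
    intro k k'
    have h := orthonormal_iff_ite.mp e.orthonormal k k'
    rw [PiLp.inner_apply] at h
    simpa [RCLike.inner_apply, mul_comm] using h
  -- eigenvector equation, concretely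
  have hmul : ∀ k', ρ *ᵥ ⇑(e k') = fun a => (lam k' : ℂ) * e k' a := by
    intro k'
    have h := hherm.mulVec_eigenvectorBasis k'
    funext a
    have := congrFun h a
    simpa [Complex.real_smul] using this
  -- action of ρ expanded through the decomposition
  have hrv : ∀ (v : Fin n → ℂ) (a : Fin n),
      (ρ *ᵥ v) a = ∑ i, (p i : ℂ) * φ i a * ∑ b, (starRingEnd ℂ) (φ i b) * v b := by
    intro v a
    rw [hdecomp]
    simp only [mulVec, dotProduct, Matrix.sum_apply, Matrix.smul_apply, vecMulVec_apply,
      smul_eq_mul, Pi.star_apply, Finset.sum_mul, Finset.mul_sum]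
    rw [Finset.sum_comm]
    refine Finset.sum_congr rfl fun i _ => Finset.sum_congr rfl fun b _ => ?_
    simp only [RCLike.star_def]
    ring
  -- the key orthogonality relation for the columns of √p·u
  have hkey : ∀ k k', ∑ i, (p i : ℂ) * (starRingEnd ℂ) (u i k') * u i k
      = if k = k' then (lam k : ℂ) else 0 := by
    intro k k'
    have lhs_eq : ∑ a, (starRingEnd ℂ) (e k a) * (ρ *ᵥ ⇑(e k')) a
        = ∑ i, (p i : ℂ) * (starRingEnd ℂ) (u i k') * u i k := by
      have : ∀ a, (ρ *ᵥ ⇑(e k')) a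
          = ∑ i, (p i : ℂ) * φ i a * (starRingEnd ℂ) (u i k') := by
        intro a
        rw [hrv (⇑(e k')) a]
        refine Finset.sum_congr rfl fun i _ => ?_
        congr 1
        rw [hudef]
        simp only [map_sum, _root_.map_mul, Complex.conj_conj]
        refine Finset.sum_congr rfl fun b _ => ?_
        ring
      calc ∑ a, (starRingEnd ℂ) (e k a) * (ρ *ᵥ ⇑(e k')) a
          = ∑ a, ∑ i, (p i : ℂ) * (starRingEnd ℂ) (u i k')
              * ((starRingEnd ℂ) (e k a) * φ i a) := by
            refine Finset.sum_congr rfl fun a _ => ?_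
            rw [this a, Finset.mul_sum]
            exact Finset.sum_congr rfl fun i _ => by ring
        _ = ∑ i, ∑ a, (p i : ℂ) * (starRingEnd ℂ) (u i k')
              * ((starRingEnd ℂ) (e k a) * φ i a) := Finset.sum_comm
        _ = ∑ i, (p i : ℂ) * (starRingEnd ℂ) (u i k') * u i k := by
            refine Finset.sum_congr rfl fun i _ => ?_
            rw [hudef, Finset.mul_sum]
    have rhs_eq : ∑ a, (starRingEnd ℂ) (e k a) * (ρ *ᵥ ⇑(e k')) a
        = if k = k' then (lam k : ℂ) else 0 := by
      rw [hmul k']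
      have : ∑ a, (starRingEnd ℂ) (e k a) * ((lam k' : ℂ) * e k' a)
          = (lam k' : ℂ) * ∑ a, (starRingEnd ℂ) (e k a) * e k' a := by
        rw [Finset.mul_sum]
        exact Finset.sum_congr rfl fun a _ => by ring
      rw [this, hon k k']
      by_cases h : k = k'
      · subst h; simp
      · simp [h]
    rw [← lhs_eq, rhs_eq]
  -- diagonal part: real form
  have hdiag : ∀ k, ∑ i, p i * ‖u i k‖ ^ 2 = lam k := by
    intro k
    have h := hkey k k
    rw [if_pos rfl] at h
    have h2 : ∀ i, (p i : ℂ) * (starRingEnd ℂ) (u i k) * u i k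
        = ((p i * ‖u i k‖ ^ 2 : ℝ) : ℂ) := by
      intro i
      rw [mul_assoc, mul_comm ((starRingEnd ℂ) (u i k)) (u i k), Complex.mul_conj,
        Complex.normSq_eq_norm_sq]
      push_cast
      ring
    have h4 : ((∑ i, p i * ‖u i k‖ ^ 2 : ℝ) : ℂ) = ((lam k : ℝ) : ℂ) := by
      rw [Complex.ofReal_sum, ← h]
      exact Finset.sum_congr rfl fun i _ => (h2 i).symm
    exact_mod_cast h4
  -- Parseval: each φ i has unit norm in the eigenbasis coordinates
  have hpar : ∀ i, ∑ k, ‖u i k‖ ^ 2 = 1 := by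
    intro i
    set x : EuclideanSpace ℂ (Fin n) := WithLp.toLp 2 (φ i) with hx
    have hinner : ∀ k, (inner ℂ (e k) x : ℂ) = u i k := by
      intro k
      simp only [PiLp.inner_apply, RCLike.inner_apply, hudef, hx, PiLp.toLp_apply, mul_comm]
    have hps := e.sum_inner_mul_inner x x
    have hxx : (inner ℂ x x : ℂ) = ((1 : ℝ) : ℂ) := by
      rw [inner_self_eq_norm_sq_to_K]
      have hnx : ‖x‖ ^ 2 = 1 := by
        rw [EuclideanSpace.norm_eq, Real.sq_sqrt (Finset.sum_nonneg fun a _ => sq_nonneg _)]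
        exact hφ i
      rw [← RCLike.ofReal_pow, hnx]
      norm_num
    have hterm : ∀ k, (inner ℂ x (e k) : ℂ) * (inner ℂ (e k) x : ℂ)
        = ((‖u i k‖ ^ 2 : ℝ) : ℂ) := by
      intro k
      have h5 : (inner ℂ x (e k) : ℂ) = (starRingEnd ℂ) (u i k) := by
        rw [← hinner k, inner_conj_symm]
      rw [h5, hinner k, mul_comm, Complex.mul_conj, Complex.normSq_eq_norm_sq]
    have h6 : ((∑ k, ‖u i k‖ ^ 2 : ℝ) : ℂ) = ((1 : ℝ) : ℂ) := by
      rw [Complex.ofReal_sum, ← hxx, ← hps]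
      exact Finset.sum_congr rfl fun k _ => (hterm k).symm
    exact_mod_cast h6
  -- support of the eigenvalues
  set S : Finset (Fin n) := Finset.univ.filter (fun k => lam k ≠ 0) with hSdef
  have hmemS : ∀ k, k ∈ S ↔ lam k ≠ 0 := by
    intro k; simp [hSdef]
  have hzero : ∀ k, lam k = 0 → ∀ i, p i * ‖u i k‖ ^ 2 = 0 := by
    intro k hk i
    have hsum0 : ∑ i, p i * ‖u i k‖ ^ 2 = 0 := by rw [hdiag k, hk]
    exact (Finset.sum_eq_zero_iff_of_nonneg
      (fun j _ => mul_nonneg (hp0 j) (sq_nonneg _))).mp hsum0 i (Finset.mem_univ i)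
  -- Bessel: row sums of the doubly substochastic matrix are at most 1
  have hbessel : ∀ i, ∑ k ∈ S, p i * ‖u i k‖ ^ 2 / lam k ≤ 1 := by
    intro i
    set v : {k : Fin n // lam k ≠ 0} → EuclideanSpace ℂ (Fin m) :=
      fun k => WithLp.toLp 2 (fun j => ((Real.sqrt (p j) : ℝ) : ℂ) * u j k.1
        / ((Real.sqrt (lam k.1) : ℝ) : ℂ)) with hvdef
    have hlampos : ∀ k : {k : Fin n // lam k ≠ 0}, 0 < lam k.1 :=
      fun k => lt_of_le_of_ne (hlam0 k.1) (Ne.symm k.2)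
    have hvon : Orthonormal ℂ v := by
      rw [orthonormal_iff_ite]
      intro k k'
      rw [PiLp.inner_apply]
      have hterm : ∀ j, (inner ℂ (v k j) (v k' j) : ℂ)
          = ((p j : ℂ) * (starRingEnd ℂ) (u j k.1) * u j k'.1)
            / (((Real.sqrt (lam k.1) : ℝ) : ℂ) * ((Real.sqrt (lam k'.1) : ℝ) : ℂ)) := by
        intro j
        rw [RCLike.inner_apply, hvdef]
        simp only [map_div₀, _root_.map_mul, Complex.conj_ofReal]
        have hpj : ((Real.sqrt (p j) : ℝ) : ℂ) * ((Real.sqrt (p j) : ℝ) : ℂ) = (p j : ℂ) := by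
          rw [← Complex.ofReal_mul, Real.mul_self_sqrt (hp0 j)]
        field_simp
        rw [← hpj]
        ring
      rw [Finset.sum_congr rfl fun j _ => hterm j, ← Finset.sum_div]
      have hswap : ∑ j, (p j : ℂ) * (starRingEnd ℂ) (u j k.1) * u j k'.1
          = if k'.1 = k.1 then (lam k'.1 : ℂ) else 0 := hkey k'.1 k.1
      rw [hswap]
      by_cases h : k = k'
      · subst h
        rw [if_pos rfl, if_pos rfl]
        rw [← Complex.ofReal_mul, Real.mul_self_sqrt (hlam0 k.1)]
        exact div_self (by exact_mod_cast k.2)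
      · have h1 : k'.1 ≠ k.1 := fun hc => h (Subtype.ext hc.symm)
        rw [if_neg h1, if_neg h, zero_div]
    -- apply Bessel with the standard basis vector
    have hb := hvon.sum_inner_products_le (EuclideanSpace.single i (1 : ℂ))
      (s := Finset.univ)
    rw [EuclideanSpace.norm_single] at hb
    have hinner : ∀ k : {k : Fin n // lam k ≠ 0},
        ‖(inner ℂ (v k) (EuclideanSpace.single i (1 : ℂ)) : ℂ)‖ ^ 2
          = p i * ‖u i k.1‖ ^ 2 / lam k.1 := by
      intro k
      rw [PiLp.inner_apply]
      have : ∑ j, (inner ℂ (v k j) (EuclideanSpace.single i (1 : ℂ) j) : ℂ)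
          = (starRingEnd ℂ) (v k i) := by
        rw [Finset.sum_eq_single i]
        · simp [RCLike.inner_apply, EuclideanSpace.single_apply]
        · intro j _ hj
          simp [RCLike.inner_apply, EuclideanSpace.single_apply, hj]
        · intro h; exact absurd (Finset.mem_univ i) h
      rw [this, RCLike.norm_conj]
      rw [hvdef]
      simp only [norm_div, norm_mul, Complex.norm_real,
        Real.norm_eq_abs, abs_of_nonneg (Real.sqrt_nonneg _)]
      rw [div_pow, mul_pow, Real.sq_sqrt (hp0 i), Real.sq_sqrt (hlam0 k.1)]
    calc ∑ k ∈ S, p i * ‖u i k‖ ^ 2 / lam k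
        = ∑ k : {k : Fin n // lam k ≠ 0}, p i * ‖u i k.1‖ ^ 2 / lam k.1 := by
          rw [← Finset.sum_subtype S (fun k => (hmemS k))
            (fun k => p i * ‖u i k‖ ^ 2 / lam k)]
      _ = ∑ k : {k : Fin n // lam k ≠ 0},
            ‖(inner ℂ (v k) (EuclideanSpace.single i (1 : ℂ)) : ℂ)‖ ^ 2 :=
          (Finset.sum_congr rfl fun k _ => (hinner k).symm)
      _ ≤ ‖(1 : ℂ)‖ ^ 2 := hb
      _ = 1 := by norm_num
  -- p i decomposes through the eigenvalues
  have hpdec : ∀ i, ∑ k ∈ S, (p i * ‖u i k‖ ^ 2 / lam k) * lam k = p i := by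
    intro i
    have h1 : ∑ k ∈ S, (p i * ‖u i k‖ ^ 2 / lam k) * lam k
        = ∑ k ∈ S, p i * ‖u i k‖ ^ 2 := by
      refine Finset.sum_congr rfl fun k hk => ?_
      rw [div_mul_cancel₀ _ ((hmemS k).mp hk)]
    rw [h1]
    have h2 : ∑ k ∈ S, p i * ‖u i k‖ ^ 2 = ∑ k, p i * ‖u i k‖ ^ 2 := by
      refine Finset.sum_subset (Finset.subset_univ S) fun k _ hk => ?_
      have : lam k = 0 := by
        by_contra hc
        exact hk ((hmemS k).mpr hc)
      exact hzero k this i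
    rw [h2, ← Finset.mul_sum, hpar i, mul_one]
  -- column sums are exactly 1 on the support
  have hcol : ∀ k ∈ S, ∑ i, p i * ‖u i k‖ ^ 2 / lam k = 1 := by
    intro k hk
    rw [← Finset.sum_div, hdiag k, div_self ((hmemS k).mp hk)]
  -- rewrite the entropies via negMulLog
  have hVN : vonNeumannEntropy ρ = ∑ k, Real.negMulLog (lam k) := by
    rw [vonNeumannEntropy, dif_pos hherm]
    simp only [Real.negMulLog, neg_mul, Finset.sum_neg_distrib]
    rfl
  have hSH : shannonEntropy p = ∑ i, Real.negMulLog (p i) := by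
    rw [shannonEntropy]
    simp only [Real.negMulLog, neg_mul, Finset.sum_neg_distrib]
  rw [hVN, hSH]
  calc ∑ k, Real.negMulLog (lam k)
      = ∑ k ∈ S, Real.negMulLog (lam k) := by
        refine (Finset.sum_subset (Finset.subset_univ S) fun k _ hk => ?_).symm
        have : lam k = 0 := by
          by_contra hc
          exact hk ((hmemS k).mpr hc)
        rw [this, Real.negMulLog_zero]
    _ = ∑ k ∈ S, (∑ i, p i * ‖u i k‖ ^ 2 / lam k) * Real.negMulLog (lam k) := by
        refine Finset.sum_congr rfl fun k hk => ?_
        rw [hcol k hk, one_mul]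
    _ = ∑ k ∈ S, ∑ i, (p i * ‖u i k‖ ^ 2 / lam k) * Real.negMulLog (lam k) := by
        refine Finset.sum_congr rfl fun k _ => ?_
        rw [Finset.sum_mul]
    _ = ∑ i, ∑ k ∈ S, (p i * ‖u i k‖ ^ 2 / lam k) * Real.negMulLog (lam k) :=
        Finset.sum_comm
    _ ≤ ∑ i, Real.negMulLog (p i) := by
        refine Finset.sum_le_sum fun i _ => ?_
        have := negMulLog_jensen_sub S (fun k => p i * ‖u i k‖ ^ 2 / lam k) lam
          (fun k hk => div_nonneg (mul_nonneg (hp0 i) (sq_nonneg _)) (hlam0 k))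
          (fun k _ => hlam0 k) (hbessel i)
        rw [hpdec i] at this
        exact this
end

section
/- For every n×n complex density matrix ρ, the von Neumann entropy S_VN(ρ) is the minimum of the set { H(p) : m ∈ ℕ, p a probability vector of length m, φ₁,…,φ_m unit vectors in ℂⁿ, ρ = Σ_{i=1}^{m} p_i |φ_i⟩⟨φ_i| }; in particular this set has a least element, attained by the spectral decomposition of ρ. -/
open Matrix
open scoped ComplexOrder

private lemma shannonEntropy_eq {m : ℕ} (p : Fin m → ℝ) :
    shannonEntropy p = ∑ i, Real.negMulLog (p i) := by
  simp [shannonEntropy, Real.negMulLog, Finset.sum_neg_distrib]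

open Finset in
private lemma jensen_negMulLog {k : ℕ} (w lam : Fin k → ℝ) (hw : ∀ j, 0 ≤ w j)
    (hw1 : ∑ j, w j ≤ 1) (hlam : ∀ j, 0 ≤ lam j) :
    ∑ j, w j * Real.negMulLog (lam j) ≤ Real.negMulLog (∑ j, w j * lam j) := by
  classical
  set w' : Option (Fin k) → ℝ := fun o => o.elim (1 - ∑ j, w j) w with hw'
  set q' : Option (Fin k) → ℝ := fun o => o.elim 0 lam with hq'
  have h := Real.concaveOn_negMulLog.le_map_sum (t := (Finset.univ : Finset (Option (Fin k))))
    (w := w') (p := q') ?_ ?_ ?_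
  · simpa [hw', hq', Fintype.sum_option, Real.negMulLog_zero, smul_eq_mul] using h
  · rintro (_|j) _
    · simpa [hw'] using sub_nonneg.mpr hw1
    · exact hw j
  · simp [hw', Fintype.sum_option]
  · rintro (_|j) _ <;> simp [hq', Set.mem_Ici, hlam]


lemma entropy_key {n m : ℕ} (lam : Fin n → ℝ) (p : Fin m → ℝ) (g : Fin n → Fin m → ℂ)
    (hlam0 : ∀ j, 0 ≤ lam j)
    (hF : ∀ j k, ∑ i, g j i * (starRingEnd ℂ) (g k i) = (lam k : ℂ) * (if j = k then 1 else 0))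
    (hP : ∀ i, ∑ j, g j i * (starRingEnd ℂ) (g j i) =(p i : ℂ)) :
    ∑ j, Real.negMulLog (lam j) ≤ ∑ i, Real.negMulLog (p i) := by
  classical
  set q : Fin n → Fin m → ℝ := fun j i => ‖g j i‖ ^ 2 with hqdef
  have hq0 : ∀ j i, 0 ≤ q j i := fun j i => sq_nonneg _
  have hgq : ∀ j i, g j i * (starRingEnd ℂ) (g j i) = ((q j i : ℝ) : ℂ) := fun j i => by
    rw [RCLike.mul_conj]; norm_cast
  have hFq : ∀ j, ∑ i, q j i = lam j := by
    intro j
    have h := hF j j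
    rw [if_pos rfl, mul_one] at h
    simp only [hgq] at h
    exact_mod_cast (by push_cast at h ⊢; exact h : ((∑ i, q j i : ℝ) : ℂ) = (lam j : ℝ))
  have hPq : ∀ i, ∑ j, q j i = p i := by
    intro i
    have h := hP i
    simp only [hgq] at h
    exact_mod_cast (by push_cast at h ⊢; exact h : ((∑ j, q j i : ℝ) : ℂ) = (p i : ℝ))
  have hqz : ∀ j, lam j = 0 → ∀ i, q j i = 0 := by
    intro j hj i
    have h : ∑ i, q j i = 0 := by rw [hFq j, hj]
    exact (Finset.sum_eq_zero_iff_of_nonneg (fun i _ => hq0 j i)).mp h i (Finset.mem_univ i)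
  -- Bessel
  set v : {j : Fin n // lam j ≠ 0} → EuclideanSpace ℂ (Fin m) :=
    fun j => (WithLp.equiv 2 (Fin m → ℂ)).symm
      (fun i => (starRingEnd ℂ) (g j.1 i) / (Real.sqrt (lam j.1) : ℂ)) with hvdef
  have hinner : ∀ j k : {j : Fin n // lam j ≠ 0}, (inner ℂ (v j) (v k) : ℂ)
      = (lam k.1 : ℂ) * (if j.1 = k.1 then 1 else 0)
        / ((Real.sqrt (lam j.1) : ℂ) * (Real.sqrt (lam k.1) : ℂ)) := by
    intro j k
    rw [← hF]
    simp only [hvdef, PiLp.inner_apply, RCLike.inner_apply, WithLp.equiv_symm_apply, PiLp.toLp_apply,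
      map_div₀, starRingEnd_self_apply, Complex.conj_ofReal]
    rw [Finset.sum_div]
    exact Finset.sum_congr rfl fun i _ => by ring
  have hv : Orthonormal ℂ v := by
    rw [orthonormal_iff_ite]
    intro j k
    rw [hinner]
    by_cases h : j = k
    · subst h
      rw [if_pos rfl, if_pos rfl, mul_one]
      have hs : (Real.sqrt (lam j.1) : ℂ) * (Real.sqrt (lam j.1) : ℂ) = (lam j.1 : ℂ) := by
        norm_cast; exact Real.mul_self_sqrt (hlam0 j.1)
      rw [hs, div_self (by exact_mod_cast j.2)]
    · rw [if_neg h, if_neg (fun hh => h (Subtype.ext hh)), mul_zero, zero_div]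
  set w : Fin m → Fin n → ℝ := fun i j => if lam j = 0 then 0 else q j i / lam j with hwdef
  have hw0 : ∀ i j, 0 ≤ w i j := by
    intro i j
    rw [hwdef]
    by_cases h : lam j = 0
    · simp [h]
    · simp only [h, if_false]
      exact div_nonneg (hq0 j i) (hlam0 j)
  have hw1 : ∀ i, ∑ j, w i j ≤ 1 := by
    intro i
    have hb := hv.sum_inner_products_le (𝕜 := ℂ) (x := EuclideanSpace.single i (1 : ℂ))
      (s := Finset.univ)
    have hx : ‖EuclideanSpace.single i (1 : ℂ)‖ ^ 2 = 1 := by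
      rw [EuclideanSpace.norm_single]; simp
    rw [hx] at hb
    have hterm : ∀ j : {j : Fin n // lam j ≠ 0},
        ‖(inner ℂ (v j) (EuclideanSpace.single i (1 : ℂ)) : ℂ)‖ ^ 2 = q j.1 i / lam j.1 := by
      intro j
      have h1 : (inner ℂ (v j) (EuclideanSpace.single i (1 : ℂ)) : ℂ)
          = g j.1 i / (Real.sqrt (lam j.1) : ℂ) := by
        simp only [hvdef, PiLp.inner_apply, RCLike.inner_apply, WithLp.equiv_symm_apply, PiLp.toLp_apply,
          EuclideanSpace.single_apply, map_div₀, starRingEnd_self_apply, Complex.conj_ofReal,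
          mul_ite, mul_one, mul_zero, ite_mul, one_mul, zero_mul]
        rw [Finset.sum_ite_eq' Finset.univ i (fun i' => g j.1 i' / (Real.sqrt (lam j.1) : ℂ))]
        simp
      rw [h1, norm_div, div_pow, Complex.norm_real, Real.norm_eq_abs,
        abs_of_nonneg (Real.sqrt_nonneg _), Real.sq_sqrt (hlam0 j.1)]
    have hsum : ∑ j, w i j = ∑ j : {j : Fin n // lam j ≠ 0}, q j.1 i / lam j.1 := by
      rw [hwdef]
      calc ∑ j, (if lam j = 0 then 0 else q j i / lam j)
          = ∑ j ∈ Finset.univ.filter (fun j => lam j ≠ 0), q j i / lam j := by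
            rw [Finset.sum_filter]
            exact Finset.sum_congr rfl fun j _ => by by_cases h : lam j = 0 <;> simp [h]
        _ = ∑ j : {j : Fin n // lam j ≠ 0}, q j.1 i / lam j.1 := by
            rw [Finset.sum_subtype (p := fun j => lam j ≠ 0) (Finset.univ.filter (fun j => lam j ≠ 0))
              (by simp) (fun j => q j i / lam j)]
    rw [hsum]
    calc ∑ j : {j : Fin n // lam j ≠ 0}, q j.1 i / lam j.1
        = ∑ j : {j : Fin n // lam j ≠ 0},
            ‖(inner ℂ (v j) (EuclideanSpace.single i (1 : ℂ)) : ℂ)‖ ^ 2 :=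
          (Finset.sum_congr rfl fun j _ => (hterm j).symm)
      _ ≤ 1 := hb
  have hwl : ∀ i, ∑ j, w i j * lam j = p i := by
    intro i
    rw [← hPq i]
    refine Finset.sum_congr rfl fun j _ => ?_
    rw [hwdef]
    by_cases h : lam j = 0
    · simp [h, hqz j h i]
    · simp only [h, if_false]
      exact div_mul_cancel₀ _ h
  have hkey : ∀ i, ∑ j, w i j * Real.negMulLog (lam j) ≤ Real.negMulLog (p i) := by
    intro i
    have := jensen_negMulLog (w i) lam (hw0 i) (hw1 i) hlam0
    rwa [hwl i] at this
  calc ∑ j, Real.negMulLog (lam j)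
      = ∑ j, (∑ i, w i j) * Real.negMulLog (lam j) := by
        refine Finset.sum_congr rfl fun j _ => ?_
        by_cases h : lam j = 0
        · simp [h, Real.negMulLog_zero]
        · have : ∑ i, w i j = 1 := by
            have : ∑ i, w i j = (∑ i, q j i) / lam j := by
              rw [Finset.sum_div]
              exact Finset.sum_congr rfl fun i _ => by rw [hwdef]; simp [h]
            rw [this, hFq j, div_self h]
          rw [this, one_mul]
    _ = ∑ i, ∑ j, w i j * Real.negMulLog (lam j) := by
        rw [Finset.sum_comm]
        exact Finset.sum_congr rfl fun j _ => by rw [Finset.sum_mul]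
    _ ≤ ∑ i, Real.negMulLog (p i) := Finset.sum_le_sum fun i _ => hkey i

/-- The von Neumann entropy of a density matrix `ρ` is the *minimum* (least element,
attained e.g. by the spectral decomposition) of the set of Shannon entropies of the
weights of all decompositions of `ρ` into pure (rank-one) states. -/
theorem isLeast_shannonEntropy_pure_decompositions
    (n : ℕ) (ρ : Matrix (Fin n) (Fin n) ℂ) (hρ : ρ.PosSemidef) (htr : ρ.trace = 1) :
    IsLeast
      {x : ℝ | ∃ (m : ℕ) (p : Fin m → ℝ) (φ : Fin m → (Fin n → ℂ)),
        (∀ i, 0 ≤ p i) ∧ (∑ i, p i = 1) ∧ (∀ i, ∑ a, ‖φ i a‖ ^ 2 = 1) ∧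
        ρ = ∑ i, (p i : ℂ) • Matrix.vecMulVec (φ i) (star (φ i)) ∧
        x = shannonEntropy p}
      (vonNeumannEntropy ρ) := by
  classical
  have hH : ρ.IsHermitian := hρ.1
  set lam : Fin n → ℝ := hH.eigenvalues with hlamdef
  set e : Fin n → Fin n → ℂ := fun j a => (hH.eigenvectorUnitary : Matrix (Fin n) (Fin n) ℂ) a j
    with hedef
  have hD1 : ∀ j k, ∑ a, (starRingEnd ℂ) (e j a) * e k a = if j = k then 1 else 0 := by
    intro j k
    have h1 : star (hH.eigenvectorUnitary : Matrix (Fin n) (Fin n) ℂ) *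
        (hH.eigenvectorUnitary : Matrix (Fin n) (Fin n) ℂ) = 1 :=
      Matrix.mem_unitaryGroup_iff'.mp hH.eigenvectorUnitary.2
    have h2 : (star (hH.eigenvectorUnitary : Matrix (Fin n) (Fin n) ℂ) *
        (hH.eigenvectorUnitary : Matrix (Fin n) (Fin n) ℂ)) j k
          = (1 : Matrix (Fin n) (Fin n) ℂ) j k := by rw [h1]
    simpa [Matrix.mul_apply, Matrix.one_apply, Matrix.star_apply, hedef] using h2
  have hD2 : ∀ a b, ∑ j, (starRingEnd ℂ) (e j a) * e j b = if a = b then 1 else 0 := by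
    intro a b
    have h1 : (hH.eigenvectorUnitary : Matrix (Fin n) (Fin n) ℂ) *
        star (hH.eigenvectorUnitary : Matrix (Fin n) (Fin n) ℂ) = 1 :=
      Matrix.mem_unitaryGroup_iff.mp hH.eigenvectorUnitary.2
    have h2 : ((hH.eigenvectorUnitary : Matrix (Fin n) (Fin n) ℂ) *
        star (hH.eigenvectorUnitary : Matrix (Fin n) (Fin n) ℂ)) b a
          = (1 : Matrix (Fin n) (Fin n) ℂ) b a := by rw [h1]
    simp only [Matrix.mul_apply, Matrix.one_apply, Matrix.star_apply] at h2
    rw [show (if a = b then (1:ℂ) else 0) = if b = a then 1 else 0 by simp [eq_comm], ← h2]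
    exact Finset.sum_congr rfl fun j _ => by rw [mul_comm]; rfl
  have hspec : ρ = ∑ j, (lam j : ℂ) • vecMulVec (e j) (star (e j)) := by
    conv_lhs => rw [hH.spectral_theorem]
    ext a b
    simp only [Unitary.conjStarAlgAut_apply, Matrix.mul_apply, Matrix.diagonal_apply, Matrix.sum_apply, Matrix.smul_apply,
      vecMulVec_apply, Pi.star_apply, Matrix.star_apply, Function.comp_apply, hedef,
      Finset.mul_sum, Finset.sum_mul, smul_eq_mul]
    rw [Finset.sum_comm]
    refine Finset.sum_congr rfl fun j _ => ?_
    simp [Finset.sum_ite_eq, mul_comm, mul_assoc, mul_left_comm, hlamdef]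
  have htr' : ∑ j, lam j = 1 := by
    have h1 : ρ.trace = ∑ j, (lam j : ℂ) := by
      rw [hspec]
      simp only [Matrix.trace, Matrix.diag, Matrix.sum_apply, Matrix.smul_apply, vecMulVec_apply,
        Pi.star_apply, smul_eq_mul]
      rw [Finset.sum_comm]
      refine Finset.sum_congr rfl fun j _ => ?_
      rw [← Finset.mul_sum]
      have h0 : ∑ a, e j a * star (e j a) = 1 := by
        have h := hD1 j j
        simp at h
        rw [← h]
        exact Finset.sum_congr rfl fun a _ => mul_comm _ _
      rw [h0, mul_one]
    rw [htr] at h1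
    exact_mod_cast h1.symm
  have hunit : ∀ j, ∑ a, ‖e j a‖ ^ 2 = 1 := by
    intro j
    have h1 := hD1 j j
    simp at h1
    have h2 : ∀ z : ℂ, (starRingEnd ℂ) z * z = ((‖z‖ ^ 2 : ℝ) : ℂ) := fun z => by
      rw [RCLike.conj_mul]; norm_cast
    simp only [h2] at h1
    exact_mod_cast (by push_cast at h1 ⊢; exact h1 : ((∑ a, ‖e j a‖ ^ 2 : ℝ) : ℂ) = 1)
  have hVN : vonNeumannEntropy ρ = ∑ j, Real.negMulLog (lam j) := by
    rw [show vonNeumannEntropy ρ = _ from dif_pos hH]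
    simp [Real.negMulLog, Finset.sum_neg_distrib, hlamdef]
  constructor
  · -- membership: spectral decomposition
    exact ⟨n, lam, e, fun j => hρ.eigenvalues_nonneg j, htr', hunit, hspec, by
      rw [hVN, shannonEntropy_eq]⟩
  · -- lower bound
    rintro x ⟨m, p, φ, hp0, hp1, hφ, hdec, rfl⟩
    rw [hVN, shannonEntropy_eq]
    have heig : ∀ k, ρ *ᵥ e k = (lam k : ℂ) • e k := by
      intro k
      have h := hH.mulVec_eigenvectorBasis k
      have he : e k = ⇑(hH.eigenvectorBasis k) := by funext a; simp [hedef]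
      rw [he, h]
      funext a
      simp [Complex.real_smul, hlamdef]
    set ψ : Fin m → Fin n → ℂ := fun i a => (Real.sqrt (p i) : ℂ) * φ i a with hψdef
    have hρab : ∀ a b, ρ a b = ∑ i, ψ i a * (starRingEnd ℂ) (ψ i b) := by
      intro a b
      rw [hdec]
      simp only [Matrix.sum_apply, Matrix.smul_apply, vecMulVec_apply, Pi.star_apply,
        Matrix.star_apply, smul_eq_mul, hψdef]
      refine Finset.sum_congr rfl fun i _ => ?_
      simp only [RCLike.star_def, _root_.map_mul, Complex.conj_ofReal]
      rw [show ((p i : ℂ)) = (Real.sqrt (p i) : ℂ) * (Real.sqrt (p i) : ℂ) by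
        norm_cast; exact (Real.mul_self_sqrt (hp0 i)).symm]
      ring
    set g : Fin n → Fin m → ℂ := fun j i => ∑ a, (starRingEnd ℂ) (e j a) * ψ i a with hgdef
    have hF : ∀ j k, ∑ i, g j i * (starRingEnd ℂ) (g k i)
        = (lam k : ℂ) * (if j = k then 1 else 0) := by
      intro j k
      have step1 : ∀ i, g j i * (starRingEnd ℂ) (g k i)
          = ∑ a, ∑ b, (starRingEnd ℂ) (e j a) * e k b * (ψ i a * (starRingEnd ℂ) (ψ i b)) := by
        intro i
        rw [hgdef]
        simp only [map_sum]
        rw [Finset.sum_mul_sum]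
        refine Finset.sum_congr rfl fun a _ => Finset.sum_congr rfl fun b _ => ?_
        simp only [_root_.map_mul, RingHomCompTriple.comp_apply, RingHom.id_apply,
          starRingEnd_self_apply]
        ring
      calc ∑ i, g j i * (starRingEnd ℂ) (g k i)
          = ∑ i, ∑ a, ∑ b, (starRingEnd ℂ) (e j a) * e k b * (ψ i a * (starRingEnd ℂ) (ψ i b)) :=
            Finset.sum_congr rfl fun i _ => step1 i
        _ = ∑ a, ∑ b, (starRingEnd ℂ) (e j a) * e k b
              * (∑ i, ψ i a * (starRingEnd ℂ) (ψ i b)) := by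
            rw [Finset.sum_comm]
            refine Finset.sum_congr rfl fun a _ => ?_
            rw [Finset.sum_comm]
            refine Finset.sum_congr rfl fun b _ => ?_
            rw [Finset.mul_sum]
        _ = ∑ a, (starRingEnd ℂ) (e j a) * (∑ b, ρ a b * e k b) := by
            refine Finset.sum_congr rfl fun a _ => ?_
            rw [Finset.mul_sum]
            refine Finset.sum_congr rfl fun b _ => ?_
            rw [← hρab a b]; ring
        _ = ∑ a, (starRingEnd ℂ) (e j a) * ((lam k : ℂ) * e k a) := by
            refine Finset.sum_congr rfl fun a _ => ?_
            have := congrFun (heig k) a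
            simp only [Matrix.mulVec, dotProduct, Pi.smul_apply, smul_eq_mul] at this
            rw [this]
        _ = (lam k : ℂ) * ∑ a, (starRingEnd ℂ) (e j a) * e k a := by
            rw [Finset.mul_sum]; exact Finset.sum_congr rfl fun a _ => by ring
        _ = (lam k : ℂ) * (if j = k then 1 else 0) := by rw [hD1]
    have hP : ∀ i, ∑ j, g j i * (starRingEnd ℂ) (g j i) = (p i : ℂ) := by
      intro i
      have step1 : ∀ j, g j i * (starRingEnd ℂ) (g j i)
          = ∑ a, ∑ b, ψ i a * (starRingEnd ℂ) (ψ i b) * ((starRingEnd ℂ) (e j a) * e j b) := by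
        intro j
        rw [hgdef]
        simp only [map_sum]
        rw [Finset.sum_mul_sum]
        refine Finset.sum_congr rfl fun a _ => Finset.sum_congr rfl fun b _ => ?_
        simp only [_root_.map_mul, RingHomCompTriple.comp_apply, RingHom.id_apply,
          starRingEnd_self_apply]
        ring
      calc ∑ j, g j i * (starRingEnd ℂ) (g j i)
          = ∑ j, ∑ a, ∑ b, ψ i a * (starRingEnd ℂ) (ψ i b)
              * ((starRingEnd ℂ) (e j a) * e j b) :=
            Finset.sum_congr rfl fun j _ => step1 j
        _ = ∑ a, ∑ b, ψ i a * (starRingEnd ℂ) (ψ i b)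
              * (∑ j, (starRingEnd ℂ) (e j a) * e j b) := by
            rw [Finset.sum_comm]
            refine Finset.sum_congr rfl fun a _ => ?_
            rw [Finset.sum_comm]
            refine Finset.sum_congr rfl fun b _ => ?_
            rw [Finset.mul_sum]
        _ = ∑ a, ψ i a * (starRingEnd ℂ) (ψ i a) := by
            refine Finset.sum_congr rfl fun a _ => ?_
            rw [Finset.sum_eq_single a]
            · rw [hD2, if_pos rfl, mul_one]
            · intro b _ hb
              rw [hD2, if_neg (fun h => hb h.symm), mul_zero]
            · intro h; exact absurd (Finset.mem_univ a) h
        _ = (p i : ℂ) := by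
            have h3 : ∀ a, ψ i a * (starRingEnd ℂ) (ψ i a) = ((‖ψ i a‖ ^ 2 : ℝ) : ℂ) :=
              fun a => by rw [RCLike.mul_conj]; norm_cast
            simp only [h3]
            rw [← Complex.ofReal_sum]
            norm_cast
            have h4 : ∀ a, ‖ψ i a‖ ^ 2 = p i * ‖φ i a‖ ^ 2 := fun a => by
              rw [hψdef]
              simp only [norm_mul, Complex.norm_real, Real.norm_eq_abs,
                abs_of_nonneg (Real.sqrt_nonneg _), mul_pow, Real.sq_sqrt (hp0 i)]
            simp only [h4, ← Finset.mul_sum, hφ i, mul_one]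
    exact entropy_key lam p g (fun j => hρ.eigenvalues_nonneg j) hF hP
end

section
/- Let n₁,…,n_k be positive integers, N = Σ_i n_i, and let ρ = ⊕_{i=1}^{k} p_i·ρ_i be a block-diagonal density matrix, where (p₁,…,p_k) is a probability vector and each ρ_i is an n_i×n_i density matrix. Suppose ρ = Σ_j w_j·σ_j where (w_j) is a probability vector and each σ_j is of the form 0 ⊕ … ⊕ |φ_j⟩⟨φ_j| ⊕ … ⊕ 0 for some block index and some unit vector φ_j (i.e. each σ_j is a pure state of the block algebra). Then H(w) ≥ H(p) + Σ_{i=1}^{k} p_i · S_VN(ρ_i). -/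
open Matrix
open scoped ComplexOrder

open Complex in
private lemma jensen_sub {ι : Type*} [Fintype ι] (t x : ι → ℝ)
    (ht0 : ∀ i, 0 ≤ t i) (ht1 : ∑ i, t i ≤ 1) (hx : ∀ i, 0 ≤ x i) :
    ∑ i, t i * Real.negMulLog (x i) ≤ Real.negMulLog (∑ i, t i * x i) := by
  classical
  have h := Real.concaveOn_negMulLog.le_map_sum (t := (Finset.univ : Finset (Option ι)))
    (w := fun o => o.elim (1 - ∑ i, t i) t) (p := fun o => o.elim 0 x)
    (fun o _ => by cases o with
      | none => simpa using ht1
      | some i => exact ht0 i)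
    (by simp [Fintype.sum_option])
    (fun o _ => by cases o with
      | none => exact Set.self_mem_Ici
      | some i => exact hx i)
  simpa [Fintype.sum_option, smul_eq_mul] using h

private lemma core_diag {n M : ℕ} (lam : Fin n → ℝ) (hlam : ∀ α, 0 ≤ lam α)
    (w : Fin M → ℝ) (hw : ∀ j, 0 ≤ w j)
    (c : Fin M → Fin n → ℂ)
    (hc1 : ∀ j, ∑ α, Complex.normSq (c j α) = 1)
    (hkey : ∀ α β, (if α = β then (lam α : ℂ) else 0)
      = ∑ j, (w j : ℂ) * (c j α * (starRingEnd ℂ) (c j β))) :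
    ∑ α, Real.negMulLog (lam α) ≤ ∑ j, Real.negMulLog (w j) := by
  classical
  -- diagonal identity, real form
  have hdiag : ∀ α, lam α = ∑ j, w j * Complex.normSq (c j α) := by
    intro α
    have h := hkey α α
    rw [if_pos rfl] at h
    have h2 : ((∑ j, w j * Complex.normSq (c j α) : ℝ) : ℂ)
        = ∑ j, (w j : ℂ) * (c j α * (starRingEnd ℂ) (c j α)) := by
      push_cast
      simp [Complex.mul_conj]
    exact_mod_cast h.trans h2.symm
  have hterm0 : ∀ α, lam α = 0 → ∀ j, w j * Complex.normSq (c j α) = 0 := by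
    intro α hα j
    have h0 : ∀ j ∈ Finset.univ, (0:ℝ) ≤ w j * Complex.normSq (c j α) :=
      fun j _ => mul_nonneg (hw j) (Complex.normSq_nonneg _)
    exact (Finset.sum_eq_zero_iff_of_nonneg h0).1 ((hdiag α).symm.trans hα) j (Finset.mem_univ j)
  -- quadratic form identity for arbitrary vectors
  have key2 : ∀ v : Fin n → ℂ,
      ∑ α, (starRingEnd ℂ) (v α) * ((lam α : ℂ) * v α)
        = ∑ j, (w j : ℂ) * ((∑ α, (starRingEnd ℂ) (v α) * c j α) *
            (starRingEnd ℂ) (∑ α, (starRingEnd ℂ) (v α) * c j α)) := by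
    intro v
    calc ∑ α, (starRingEnd ℂ) (v α) * ((lam α : ℂ) * v α)
        = ∑ α, ∑ β, (starRingEnd ℂ) (v α) * ((if α = β then (lam α : ℂ) else 0) * v β) := by
          refine Finset.sum_congr rfl fun α _ => ?_
          rw [Finset.sum_eq_single α]
          · simp
          · intro β _ hβ; simp [Ne.symm hβ]
          · simp
      _ = ∑ α, ∑ β, (starRingEnd ℂ) (v α) *
            ((∑ j, (w j : ℂ) * (c j α * (starRingEnd ℂ) (c j β))) * v β) := by
          simp_rw [← hkey]
      _ = ∑ α, ∑ β, ∑ j, (starRingEnd ℂ) (v α) *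
            ((w j : ℂ) * (c j α * (starRingEnd ℂ) (c j β)) * v β) := by
          simp only [Finset.sum_mul, Finset.mul_sum]
      _ = ∑ α, ∑ j, ∑ β, (starRingEnd ℂ) (v α) *
            ((w j : ℂ) * (c j α * (starRingEnd ℂ) (c j β)) * v β) :=
          Finset.sum_congr rfl fun α _ => Finset.sum_comm
      _ = ∑ j, ∑ α, ∑ β, (starRingEnd ℂ) (v α) *
            ((w j : ℂ) * (c j α * (starRingEnd ℂ) (c j β)) * v β) := Finset.sum_comm
      _ = ∑ j, (w j : ℂ) * ((∑ α, (starRingEnd ℂ) (v α) * c j α) *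
            (starRingEnd ℂ) (∑ α, (starRingEnd ℂ) (v α) * c j α)) := by
          refine Finset.sum_congr rfl fun j _ => ?_
          rw [map_sum, Finset.sum_mul_sum, Finset.mul_sum]
          refine Finset.sum_congr rfl fun α _ => ?_
          rw [Finset.mul_sum]
          refine Finset.sum_congr rfl fun β _ => ?_
          simp only [_root_.map_mul, Complex.conj_conj]
          ring
  -- row quantities
  set r : Fin M → Fin n → ℝ :=
    fun j α => if lam α = 0 then 0 else Complex.normSq (c j α) / lam α with hr
  have hr0 : ∀ j α, 0 ≤ r j α := by
    intro j α
    by_cases h : lam α = 0 <;>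
      simp [hr, h, div_nonneg (Complex.normSq_nonneg _) (hlam α)]
  set t : Fin M → ℝ := fun j => ∑ α, r j α with ht
  have ht0 : ∀ j, 0 ≤ t j := fun j => Finset.sum_nonneg fun α _ => hr0 j α
  -- row sums bounded
  have hrow : ∀ j, w j * t j ≤ 1 := by
    intro j
    set u : Fin n → ℂ := fun α => if lam α = 0 then 0 else c j α / (lam α : ℂ) with hu
    have hz : ∀ α, (starRingEnd ℂ) (u α) * c j α = (r j α : ℂ) := by
      intro α
      by_cases h : lam α = 0
      · simp [hu, hr, h]
      · have hl : ((lam α : ℂ)) ≠ 0 := by exact_mod_cast h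
        simp only [hu, hr, if_neg h, map_div₀, Complex.conj_ofReal]
        rw [div_mul_eq_mul_div, mul_comm, Complex.mul_conj]
        push_cast
        ring
    have hzsum : ∑ α, (starRingEnd ℂ) (u α) * c j α = ((t j : ℝ) : ℂ) := by
      rw [ht]
      push_cast
      exact Finset.sum_congr rfl fun α _ => hz α
    have hleft : ∑ α, (starRingEnd ℂ) (u α) * ((lam α : ℂ) * u α) = ((t j : ℝ) : ℂ) := by
      rw [ht]
      push_cast
      refine Finset.sum_congr rfl fun α _ => ?_
      by_cases h : lam α = 0
      · simp [hu, hr, h]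
      · have hl : ((lam α : ℂ)) ≠ 0 := by exact_mod_cast h
        simp only [hu, hr, if_neg h, map_div₀, Complex.conj_ofReal]
        field_simp
        rw [mul_comm ((starRingEnd ℂ) (c j α)) (c j α), Complex.mul_conj]
        rw [Complex.ofReal_div, mul_div_cancel₀ _ hl]
    have hq := (key2 u).symm.trans hleft
    -- hq : ∑ j', w j' * (Z j' * conj (Z j')) = (t j : ℂ)
    have hreal : ∑ j', w j' * Complex.normSq (∑ α, (starRingEnd ℂ) (u α) * c j' α) = t j := by
      have h2 : ((∑ j', w j' * Complex.normSq (∑ α, (starRingEnd ℂ) (u α) * c j' α) : ℝ) : ℂ)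
          = ∑ j', (w j' : ℂ) * ((∑ α, (starRingEnd ℂ) (u α) * c j' α) *
              (starRingEnd ℂ) (∑ α, (starRingEnd ℂ) (u α) * c j' α)) := by
        push_cast
        simp only [Complex.mul_conj]
      exact_mod_cast h2.trans hq
    have hge : w j * Complex.normSq (∑ α, (starRingEnd ℂ) (u α) * c j α) ≤ t j := by
      rw [← hreal]
      exact Finset.single_le_sum
        (f := fun j' => w j' * Complex.normSq (∑ α, (starRingEnd ℂ) (u α) * c j' α))
        (fun j' _ => mul_nonneg (hw j') (Complex.normSq_nonneg _)) (Finset.mem_univ j)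
    rw [hzsum, Complex.normSq_ofReal] at hge
    nlinarith [ht0 j, hw j]
  -- Jensen per j
  have hJ : ∀ j, ∑ α, (w j * r j α) * Real.negMulLog (lam α) ≤ Real.negMulLog (w j) := by
    intro j
    have h1 : ∑ α, (w j * r j α) * lam α = w j := by
      have : ∀ α, (w j * r j α) * lam α = w j * Complex.normSq (c j α) := by
        intro α
        by_cases h : lam α = 0
        · rw [h, mul_zero]; exact (hterm0 α h j).symm
        · simp only [hr, if_neg h]
          field_simp
      rw [Finset.sum_congr rfl fun α _ => this α, ← Finset.mul_sum, hc1, mul_one]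
    have h2 := jensen_sub (fun α => w j * r j α) lam
      (fun α => mul_nonneg (hw j) (hr0 j α))
      (by rw [← Finset.mul_sum]; exact hrow j) hlam
    rwa [h1] at h2
  calc ∑ α, Real.negMulLog (lam α)
      = ∑ α, ∑ j, (w j * r j α) * Real.negMulLog (lam α) := by
        refine Finset.sum_congr rfl fun α _ => ?_
        by_cases h : lam α = 0
        · simp [h]
        · rw [← Finset.sum_mul]
          have : ∑ j, w j * r j α = 1 := by
            simp only [hr, if_neg h]
            rw [Finset.sum_congr rfl fun j _ => (mul_div_assoc (w j) _ _).symm,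
              ← Finset.sum_div, ← hdiag α, div_self h]
          rw [this, one_mul]
    _ = ∑ j, ∑ α, (w j * r j α) * Real.negMulLog (lam α) := Finset.sum_comm
    _ ≤ ∑ j, Real.negMulLog (w j) := Finset.sum_le_sum fun j _ => hJ j

private lemma upd_entry {k : ℕ} (n : Fin k → ℕ) (i₀ : Fin k)
    (X : Matrix (Fin (n i₀)) (Fin (n i₀)) ℂ) (i : Fin k) (a b : Fin (n i)) :
    Matrix.blockDiagonal'
      (Function.update (fun i' => (0 : Matrix (Fin (n i')) (Fin (n i')) ℂ)) i₀ X)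
      ⟨i, a⟩ ⟨i, b⟩
    = if h : i₀ = i then X (Fin.cast (congrArg n h).symm a) (Fin.cast (congrArg n h).symm b)
      else 0 := by
  rcases eq_or_ne i₀ i with h | h
  · subst h
    simp [Matrix.blockDiagonal'_apply_eq, Function.update_self]
  · rw [dif_neg h, Matrix.blockDiagonal'_apply_eq, Function.update_of_ne (Ne.symm h)]
    rfl

/-- For a block-diagonal density matrix `ρ = ⊕_i p_i·ρ_i`, the Shannon entropy `H(w)`
of the weights of any decomposition of `ρ` into pure states of the block algebra
(each supported in a single block, as a rank-one projection there) satisfies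
`H(w) ≥ H(p) + Σ_i p_i · S_VN(ρ_i)`. -/
theorem shannonEntropy_decomposition_ge_blockEntropy
    (k : ℕ) (n : Fin k → ℕ)
    (p : Fin k → ℝ) (hp0 : ∀ i, 0 ≤ p i) (hp1 : ∑ i, p i = 1)
    (ρs : ∀ i, Matrix (Fin (n i)) (Fin (n i)) ℂ)
    (hρs : ∀ i, (ρs i).PosSemidef ∧ (ρs i).trace = 1)
    (ρ : Matrix (Σ i : Fin k, Fin (n i)) (Σ i : Fin k, Fin (n i)) ℂ)
    (hρ : ρ = Matrix.blockDiagonal' fun i => (p i : ℂ) • ρs i)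
    (M : ℕ) (w : Fin M → ℝ) (hw0 : ∀ j, 0 ≤ w j) (hw1 : ∑ j, w j = 1)
    (b : Fin M → Fin k) (φ : ∀ j, Fin (n (b j)) → ℂ)
    (hφ : ∀ j, ∑ a, ‖φ j a‖ ^ 2 = 1)
    (hdecomp : ρ = ∑ j, (w j : ℂ) •
      Matrix.blockDiagonal'
        (Function.update (fun i => (0 : Matrix (Fin (n i)) (Fin (n i)) ℂ)) (b j)
          (Matrix.vecMulVec (φ j) (star (φ j))))) :
    shannonEntropy p + ∑ i, p i * vonNeumannEntropy (ρs i) ≤ shannonEntropy w := by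
  classical
  have hn : ∀ i, 0 < n i := by
    intro i
    rcases Nat.eq_zero_or_pos (n i) with h | h
    · exfalso
      have h2 := (hρs i).2
      haveI : IsEmpty (Fin (n i)) := by rw [h]; infer_instance
      rw [Matrix.trace] at h2
      simp [Finset.univ_eq_empty] at h2
    · exact h
  have hφC : ∀ j, ∑ a, φ j a * (starRingEnd ℂ) (φ j a) = 1 := by
    intro j
    have h2 : ∑ a, Complex.normSq (φ j a) = 1 := by
      simpa [Complex.normSq_eq_norm_sq] using hφ j
    calc ∑ a, φ j a * (starRingEnd ℂ) (φ j a)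
        = ∑ a, ((Complex.normSq (φ j a) : ℝ) : ℂ) := by simp [Complex.mul_conj]
      _ = ((1:ℝ):ℂ) := by rw [← Complex.ofReal_sum, h2]
      _ = 1 := by norm_num
  have hentry : ∀ (i : Fin k) (a d : Fin (n i)),
      (p i : ℂ) * ρs i a d
        = ∑ j, (w j : ℂ) * (if h : b j = i then
            φ j (Fin.cast (congrArg n h).symm a) *
              (starRingEnd ℂ) (φ j (Fin.cast (congrArg n h).symm d)) else 0) := by
    intro i a d
    have h1 := congrFun (congrFun (hρ.symm.trans hdecomp) ⟨i, a⟩) ⟨i, d⟩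
    rw [show (Matrix.blockDiagonal' fun i => (p i : ℂ) • ρs i) ⟨i, a⟩ ⟨i, d⟩
        = (p i : ℂ) * ρs i a d from by rw [Matrix.blockDiagonal'_apply_eq]; rfl] at h1
    simp only [Matrix.sum_apply, Matrix.smul_apply, smul_eq_mul, upd_entry n] at h1
    rw [h1]
    refine Finset.sum_congr rfl fun j _ => ?_
    congr 1
  have hnorm : ∀ (i : Fin k) (j : Fin M) (h : b j = i),
      ∑ a : Fin (n i), φ j (Fin.cast (congrArg n h).symm a) *
        (starRingEnd ℂ) (φ j (Fin.cast (congrArg n h).symm a)) = 1 := by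
    intro i j h
    rw [Fintype.sum_equiv (finCongr (congrArg n h).symm)
      _ (fun a => φ j a * (starRingEnd ℂ) (φ j a)) (fun a => by rw [finCongr_apply])]
    exact hφC j
  have hsum_w : ∀ i, ∑ j, (if b j = i then w j else 0) = p i := by
    intro i
    have h1 : ((p i : ℝ) : ℂ) = ∑ a, ((p i : ℂ) * ρs i a a) := by
      rw [← Finset.mul_sum]
      have : ∑ a, ρs i a a = (1:ℂ) := (hρs i).2
      rw [this, mul_one]
    have h2 : ∑ a, ((p i : ℂ) * ρs i a a)
        = ∑ j, (((if b j = i then w j else 0) : ℝ) : ℂ) := by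
      rw [Finset.sum_congr rfl fun a _ => hentry i a a, Finset.sum_comm]
      refine Finset.sum_congr rfl fun j _ => ?_
      by_cases h : b j = i
      · simp only [dif_pos h, if_pos h, ← Finset.mul_sum]
        rw [hnorm i j h, mul_one]
      · simp [h]
    exact_mod_cast (h1.trans h2).symm
  have hblock : ∀ i, Real.negMulLog (p i) + p i * vonNeumannEntropy (ρs i)
      ≤ ∑ j, (if b j = i then Real.negMulLog (w j) else 0) := by
    intro i
    have hherm : (ρs i).IsHermitian := (hρs i).1.1
    have hVN : vonNeumannEntropy (ρs i) = ∑ α, Real.negMulLog (hherm.eigenvalues α) := by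
      rw [vonNeumannEntropy, dif_pos hherm]
      rw [← Finset.sum_neg_distrib]
      exact Finset.sum_congr rfl fun α _ => by rw [Real.negMulLog]; ring
    rcases eq_or_lt_of_le (hp0 i) with hp | hp
    · -- p i = 0
      have hwz : ∀ j, b j = i → w j = 0 := by
        intro j hj
        have h0 : ∀ j ∈ Finset.univ, (0:ℝ) ≤ (if b j = i then w j else 0) := by
          intro j _
          by_cases h : b j = i <;> simp [h, hw0 j]
        have := (Finset.sum_eq_zero_iff_of_nonneg h0).1 ((hsum_w i).trans hp.symm)
          j (Finset.mem_univ j)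
        rwa [if_pos hj] at this
      rw [← hp]
      simp only [Real.negMulLog_zero, zero_mul, zero_add]
      refine le_of_eq (Finset.sum_eq_zero fun j _ => ?_).symm
      by_cases h : b j = i
      · rw [if_pos h, hwz j h, Real.negMulLog_zero]
      · rw [if_neg h]
    · -- 0 < p i
      have hpne : p i ≠ 0 := ne_of_gt hp
      have hpC : ((p i : ℝ) : ℂ) ≠ 0 := by exact_mod_cast hpne
      set U : Matrix (Fin (n i)) (Fin (n i)) ℂ := (hherm.eigenvectorUnitary : Matrix (Fin (n i)) (Fin (n i)) ℂ)
        with hUdef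
      have hU1 : U * star U = 1 := Matrix.mem_unitaryGroup_iff.mp hherm.eigenvectorUnitary.2
      set lam : Fin (n i) → ℝ := hherm.eigenvalues with hlamdef
      haveI : NeZero (n i) := ⟨(hn i).ne'⟩
      set c : Fin M → Fin (n i) → ℂ := fun j α =>
        if h : b j = i then
          ∑ a, (starRingEnd ℂ) (U a α) * φ j (Fin.cast (congrArg n h).symm a)
        else if α = 0 then 1 else 0 with hcdef
      set w' : Fin M → ℝ := fun j => (if b j = i then w j else 0) / p i with hw'def
      have hw'0 : ∀ j, 0 ≤ w' j := by
        intro j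
        rw [hw'def]
        by_cases h : b j = i <;> simp [h, div_nonneg (hw0 j) (le_of_lt hp), hp.le]
      have hc1 : ∀ j, ∑ α, Complex.normSq (c j α) = 1 := by
        intro j
        by_cases h : b j = i
        · set ψ : Fin (n i) → ℂ := fun a => φ j (Fin.cast (congrArg n h).symm a) with hψdef
          have hcv : c j = star U *ᵥ ψ := by
            funext α
            rw [hcdef]
            simp only [dif_pos h]
            simp [Matrix.mulVec, dotProduct, Matrix.star_apply, RCLike.star_def, hψdef]
          have hC : ∑ α, ((Complex.normSq (c j α) : ℝ) : ℂ) = 1 := by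
            have h1 : ∑ α, ((Complex.normSq (c j α) : ℝ) : ℂ)
                = star (c j) ⬝ᵥ c j := by
              rw [dotProduct]
              exact Finset.sum_congr rfl fun α _ => by
                rw [Pi.star_apply, RCLike.star_def, mul_comm, Complex.mul_conj]
            rw [h1, hcv, Matrix.star_mulVec, Matrix.dotProduct_mulVec, Matrix.vecMul_vecMul,
              Matrix.star_eq_conjTranspose, Matrix.conjTranspose_conjTranspose,
              ← Matrix.star_eq_conjTranspose, hU1, Matrix.vecMul_one]
            calc star ψ ⬝ᵥ ψ = ∑ a, (starRingEnd ℂ) (ψ a) * ψ a := by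
                  exact Finset.sum_congr rfl fun a _ => by rw [Pi.star_apply, RCLike.star_def]
              _ = ∑ a, ψ a * (starRingEnd ℂ) (ψ a) := by
                  exact Finset.sum_congr rfl fun a _ => mul_comm _ _
              _ = 1 := hnorm i j h
          exact_mod_cast hC
        · rw [hcdef]
          simp only [dif_neg h]
          rw [Fintype.sum_eq_single (0 : Fin (n i)) (fun α hα => by simp [hα])]
          simp
      have hkey : ∀ α β, (if α = β then ((lam α : ℝ) : ℂ) else 0)
          = ∑ j, ((w' j : ℝ) : ℂ) * (c j α * (starRingEnd ℂ) (c j β)) := by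
        intro α β
        have hsd : (if α = β then ((lam α : ℝ) : ℂ) else 0)
            = ∑ d, (∑ a, (starRingEnd ℂ) (U a α) * ρs i a d) * U d β := by
          have h1 := (Matrix.ext_iff.mpr (show star U * ρs i * U = Matrix.diagonal (RCLike.ofReal ∘ hherm.eigenvalues) from by have := hherm.conjStarAlgAut_star_eigenvectorUnitary; rw [Unitary.conjStarAlgAut_star_apply] at this; exact this)) α β
          simp only [Matrix.mul_apply, Matrix.star_apply, RCLike.star_def,
            Matrix.diagonal_apply, Function.comp_apply] at h1
          rw [← hlamdef] at h1
          exact h1.symm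
        have hmain : ((p i : ℝ) : ℂ) * (if α = β then ((lam α : ℝ) : ℂ) else 0)
            = ∑ j, ((p i : ℝ) : ℂ) * (((w' j : ℝ) : ℂ) * (c j α * (starRingEnd ℂ) (c j β))) := by
          rw [hsd, Finset.mul_sum]
          calc ∑ d, ((p i : ℝ) : ℂ) * ((∑ a, (starRingEnd ℂ) (U a α) * ρs i a d) * U d β)
              = ∑ d, (∑ a, (starRingEnd ℂ) (U a α) * ((p i : ℂ) * ρs i a d)) * U d β := by
                refine Finset.sum_congr rfl fun d _ => ?_
                have h2 : ∑ a, (starRingEnd ℂ) (U a α) * ((p i : ℂ) * ρs i a d)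
                    = (p i : ℂ) * ∑ a, (starRingEnd ℂ) (U a α) * ρs i a d := by
                  rw [Finset.mul_sum]
                  exact Finset.sum_congr rfl fun a _ => by ring
                rw [h2]
                ring
            _ = ∑ d, (∑ a, (starRingEnd ℂ) (U a α) *
                  (∑ j, (w j : ℂ) * (if h : b j = i then
                    φ j (Fin.cast (congrArg n h).symm a) *
                      (starRingEnd ℂ) (φ j (Fin.cast (congrArg n h).symm d)) else 0))) * U d β := by
                simp_rw [hentry i]
            _ = ∑ d, ∑ a, ∑ j, (starRingEnd ℂ) (U a α) *
                  ((w j : ℂ) * (if h : b j = i then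
                    φ j (Fin.cast (congrArg n h).symm a) *
                      (starRingEnd ℂ) (φ j (Fin.cast (congrArg n h).symm d)) else 0)) * U d β := by
                simp only [Finset.mul_sum, Finset.sum_mul]
            _ = ∑ d, ∑ j, ∑ a, (starRingEnd ℂ) (U a α) *
                  ((w j : ℂ) * (if h : b j = i then
                    φ j (Fin.cast (congrArg n h).symm a) *
                      (starRingEnd ℂ) (φ j (Fin.cast (congrArg n h).symm d)) else 0)) * U d β :=
                Finset.sum_congr rfl fun d _ => Finset.sum_comm
            _ = ∑ j, ∑ d, ∑ a, (starRingEnd ℂ) (U a α) *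
                  ((w j : ℂ) * (if h : b j = i then
                    φ j (Fin.cast (congrArg n h).symm a) *
                      (starRingEnd ℂ) (φ j (Fin.cast (congrArg n h).symm d)) else 0)) * U d β :=
                Finset.sum_comm
            _ = ∑ j, ((p i : ℝ) : ℂ) * (((w' j : ℝ) : ℂ) * (c j α * (starRingEnd ℂ) (c j β))) := by
                refine Finset.sum_congr rfl fun j _ => ?_
                by_cases h : b j = i
                · have hpw : ((p i : ℝ) : ℂ) * ((w' j : ℝ) : ℂ) = (w j : ℂ) := by
                    rw [← Complex.ofReal_mul]
                    congr 1
                    rw [hw'def]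
                    simp only [if_pos h]
                    field_simp
                  have hcα : c j α = ∑ a, (starRingEnd ℂ) (U a α) *
                      φ j (Fin.cast (congrArg n h).symm a) := by
                    rw [hcdef]; simp only [dif_pos h]
                  have hcβ : (starRingEnd ℂ) (c j β) = ∑ d, U d β *
                      (starRingEnd ℂ) (φ j (Fin.cast (congrArg n h).symm d)) := by
                    rw [hcdef]; simp only [dif_pos h]
                    rw [map_sum]
                    exact Finset.sum_congr rfl fun d _ => by
                      rw [_root_.map_mul, Complex.conj_conj]
                  simp only [dif_pos h]
                  rw [← mul_assoc, hpw, hcα, hcβ, Finset.sum_mul_sum, Finset.mul_sum]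
                  conv_lhs => rw [Finset.sum_comm]
                  refine Finset.sum_congr rfl fun a _ => ?_
                  rw [Finset.mul_sum]
                  exact Finset.sum_congr rfl fun d _ => by ring
                · have hw'z : w' j = 0 := by rw [hw'def]; simp [h]
                  simp [h, hw'z]
        have h3 := hmain.trans (Finset.mul_sum _ _ _).symm
        exact mul_left_cancel₀ hpC h3
      have hcore := core_diag lam (fun α => (hρs i).1.eigenvalues_nonneg α) w' hw'0 c hc1 hkey
      have hsum_w' : ∑ j, w' j = 1 := by
        rw [hw'def, ← Finset.sum_div, hsum_w, div_self hpne]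
      have hper : ∀ j, (if b j = i then Real.negMulLog (w j) else 0)
          = Real.negMulLog (p i) * w' j + p i * Real.negMulLog (w' j) := by
        intro j
        by_cases h : b j = i
        · rw [if_pos h, hw'def]
          simp only [if_pos h]
          have h2 : Real.negMulLog (p i * (w j / p i))
              = (w j / p i) * Real.negMulLog (p i) + p i * Real.negMulLog (w j / p i) :=
            Real.negMulLog_mul _ _
          rw [mul_div_cancel₀ _ hpne] at h2
          rw [h2]
          ring
        · rw [if_neg h, hw'def]
          simp [if_neg h]
      calc Real.negMulLog (p i) + p i * vonNeumannEntropy (ρs i)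
          = Real.negMulLog (p i) + p i * ∑ α, Real.negMulLog (lam α) := by rw [hVN]
        _ ≤ Real.negMulLog (p i) + p i * ∑ j, Real.negMulLog (w' j) := by
            have := mul_le_mul_of_nonneg_left hcore (le_of_lt hp)
            linarith
        _ = ∑ j, (if b j = i then Real.negMulLog (w j) else 0) := by
            rw [Finset.sum_congr rfl fun j _ => hper j, Finset.sum_add_distrib,
              ← Finset.mul_sum, hsum_w', mul_one, Finset.mul_sum]
  -- final assembly
  have hshw : shannonEntropy w = ∑ j, Real.negMulLog (w j) := by
    rw [shannonEntropy, ← Finset.sum_neg_distrib]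
    exact Finset.sum_congr rfl fun j _ => by rw [Real.negMulLog]; ring
  have hshp : shannonEntropy p = ∑ i, Real.negMulLog (p i) := by
    rw [shannonEntropy, ← Finset.sum_neg_distrib]
    exact Finset.sum_congr rfl fun i _ => by rw [Real.negMulLog]; ring
  calc shannonEntropy p + ∑ i, p i * vonNeumannEntropy (ρs i)
      = ∑ i, (Real.negMulLog (p i) + p i * vonNeumannEntropy (ρs i)) := by
        rw [Finset.sum_add_distrib, hshp]
    _ ≤ ∑ i, ∑ j, (if b j = i then Real.negMulLog (w j) else 0) :=
        Finset.sum_le_sum fun i _ => hblock i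
    _ = ∑ j, Real.negMulLog (w j) := by
        rw [Finset.sum_comm]
        exact Finset.sum_congr rfl fun j _ => by
          rw [Finset.sum_ite_eq Finset.univ (b j) (fun _ => Real.negMulLog (w j))]
          simp
    _ = shannonEntropy w := hshw.symm
end

section
/- Let n₁,…,n_k be positive integers, N = Σ_i n_i, and let ρ = ⊕_{i=1}^{k} p_i·ρ_i be a block-diagonal density matrix, where (p₁,…,p_k) is a probability vector and each ρ_i is an n_i×n_i density matrix. Then the infimum of { H(w) : ρ = Σ_j w_j·σ_j, (w_j) a probability vector, each σ_j of the form 0 ⊕ … ⊕ |φ_j⟩⟨φ_j| ⊕ … ⊕ 0 for a block index and a unit vector φ_j } is attained and equals H(p) + Σ_{i=1}^{k} p_i · S_VN(ρ_i). -/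
open Matrix
open scoped ComplexOrder

private lemma jensen_sub_s13 {κ : Type*} [Fintype κ] (d x : κ → ℝ)
    (hd : ∀ m, 0 ≤ d m) (hs : ∑ m, d m ≤ 1) (hx : ∀ m, 0 ≤ x m) :
    ∑ m, d m * Real.negMulLog (x m) ≤ Real.negMulLog (∑ m, d m * x m) := by
  have h := Real.concaveOn_negMulLog.le_map_sum (t := (Finset.univ : Finset (Option κ)))
    (w := fun o => Option.elim o (1 - ∑ m, d m) d) (p := fun o => Option.elim o 0 x)
    (fun o _ => by cases o with
      | none => simpa using hs
      | some m => exact hd m)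
    (by simp [Fintype.sum_option])
    (fun o _ => by cases o with
      | none => exact Set.mem_Ici.2 le_rfl
      | some m => exact Set.mem_Ici.2 (hx m))
  simpa [Fintype.sum_option, Real.negMulLog_zero, smul_eq_mul] using h

private lemma keyIneq {ι κ : Type*} [Fintype ι] [DecidableEq ι] [Fintype κ] [DecidableEq κ]
    {M : ℕ}
    (X : Matrix ι κ ℂ) (lam : κ → ℝ) (hlam : ∀ m, 0 ≤ lam m)
    (hXX : X * Xᴴ = 1) (hXX' : Xᴴ * X = 1)
    (w : Fin M → ℝ) (hw : ∀ j, 0 ≤ w j)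
    (Y : Matrix ι (Fin M) ℂ) (hY : ∀ j, (Yᴴ * Y) j j = 1)
    (heq : X * Matrix.diagonal (fun m => (lam m : ℂ)) * Xᴴ
         = Y * Matrix.diagonal (fun j => (w j : ℂ)) * Yᴴ) :
    ∑ m, Real.negMulLog (lam m) ≤ ∑ j, Real.negMulLog (w j) := by
  classical
  set Z : Matrix κ (Fin M) ℂ := Xᴴ * Y with hZdef
  -- Z† Z = Y† Y
  have hZZ : Zᴴ * Z = Yᴴ * Y := by
    rw [hZdef, conjTranspose_mul, conjTranspose_conjTranspose, Matrix.mul_assoc,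
      ← Matrix.mul_assoc X, hXX, Matrix.one_mul]
  -- Z W Z† = D
  have hZWZ : Z * Matrix.diagonal (fun j => (w j : ℂ)) * Zᴴ
      = Matrix.diagonal (fun m => (lam m : ℂ)) := by
    rw [hZdef, conjTranspose_mul, conjTranspose_conjTranspose]
    calc Xᴴ * Y * diagonal (fun j => (w j : ℂ)) * (Yᴴ * X)
        = Xᴴ * (Y * diagonal (fun j => (w j : ℂ)) * Yᴴ) * X := by
          simp only [Matrix.mul_assoc]
      _ = Xᴴ * (X * diagonal (fun m => (lam m : ℂ)) * Xᴴ) * X := by rw [heq]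
      _ = (Xᴴ * X) * diagonal (fun m => (lam m : ℂ)) * (Xᴴ * X) := by
          simp only [Matrix.mul_assoc]
      _ = diagonal (fun m => (lam m : ℂ)) := by rw [hXX', Matrix.one_mul, Matrix.mul_one]
  -- entrywise versions
  have fact1 : ∀ j, ∑ m, Complex.normSq (Z m j) = 1 := by
    intro j
    have h := hZZ
    have h1 : (Zᴴ * Z) j j = 1 := by rw [hZZ]; exact hY j
    have : (∑ m, (Complex.normSq (Z m j) : ℂ)) = 1 := by
      rw [← h1, Matrix.mul_apply]
      exact Finset.sum_congr rfl fun m _ => by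
        rw [conjTranspose_apply, Complex.normSq_eq_conj_mul_self]; rfl
    exact_mod_cast this
  have fact2 : ∀ m m', (∑ j, (w j : ℂ) * ((starRingEnd ℂ) (Z m j)) * Z m' j)
      = if m' = m then ((lam m' : ℝ) : ℂ) else 0 := by
    intro m m'
    have h := congrFun (congrFun hZWZ m') m
    rw [Matrix.diagonal_apply, Matrix.mul_apply] at h
    rw [← h]
    refine Finset.sum_congr rfl fun j _ => ?_
    rw [Matrix.mul_diagonal, conjTranspose_apply]
    show (w j : ℂ) * (starRingEnd ℂ) (Z m j) * Z m' j = Z m' j * (w j : ℂ) * (starRingEnd ℂ) (Z m j)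
    ring
  have fact2d : ∀ m, ∑ j, w j * Complex.normSq (Z m j) = lam m := by
    intro m
    have h := fact2 m m
    rw [if_pos rfl] at h
    have : (∑ j, ((w j * Complex.normSq (Z m j) : ℝ) : ℂ)) = ((lam m : ℝ) : ℂ) := by
      rw [← h]
      refine Finset.sum_congr rfl fun j _ => ?_
      rw [Complex.ofReal_mul, Complex.normSq_eq_conj_mul_self]
      ring
    exact_mod_cast this
  set c : Fin M → κ → ℝ := fun j m => w j * Complex.normSq (Z m j) with hcdef
  have hc0 : ∀ j m, 0 ≤ c j m := fun j m => mul_nonneg (hw j) (Complex.normSq_nonneg _)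
  have hsumc : ∀ j, ∑ m, c j m = w j := by
    intro j
    rw [hcdef, ← Finset.mul_sum, fact1 j, mul_one]
  have hczero : ∀ m, lam m = 0 → ∀ j, c j m = 0 := by
    intro m hm j
    have hsum : ∑ j, c j m = 0 := by rw [fact2d m, hm]
    exact (Finset.sum_eq_zero_iff_of_nonneg (fun j _ => hc0 j m)).1 hsum j (Finset.mem_univ j)
  set d : Fin M → κ → ℝ := fun j m => if lam m = 0 then 0 else c j m / lam m with hddef
  have hd0 : ∀ j m, 0 ≤ d j m := by
    intro j m
    rw [hddef]
    dsimp only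
    split
    · exact le_rfl
    · exact div_nonneg (hc0 j m) (hlam m)
  have hld : ∀ j m, d j m * lam m = c j m := by
    intro j m
    rw [hddef]
    dsimp only
    by_cases hm : lam m = 0
    · rw [if_pos hm, zero_mul, hczero m hm j]
    · rw [if_neg hm, div_mul_cancel₀ _ hm]
  have hsumd : ∀ m, lam m ≠ 0 → ∑ j, d j m = 1 := by
    intro m hm
    have : ∑ j, d j m = (∑ j, c j m) / lam m := by
      rw [Finset.sum_div]
      exact Finset.sum_congr rfl fun j _ => by rw [hddef]; dsimp only; rw [if_neg hm]
    rw [this, fact2d m, div_self hm]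
  -- Bessel via projection trick
  have bessel : ∀ j, ∑ m, d j m ≤ 1 := by
    intro j
    set G : Matrix {m : κ // lam m ≠ 0} (Fin M) ℂ :=
      fun m j' => (((Real.sqrt (lam m.1))⁻¹ * Real.sqrt (w j') : ℝ) : ℂ) * Z m.1 j' with hGdef
    have hGG : G * Gᴴ = 1 := by
      ext m m'
      rw [Matrix.mul_apply, Matrix.one_apply]
      have hterm : ∀ j', G m j' * (starRingEnd ℂ) (G m' j') =
          (((Real.sqrt (lam m.1))⁻¹ * (Real.sqrt (lam m'.1))⁻¹ : ℝ) : ℂ) *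
            ((w j' : ℂ) * ((starRingEnd ℂ) (Z m'.1 j')) * Z m.1 j') := by
        intro j'
        have hW : ((Real.sqrt (w j') : ℝ) : ℂ) * ((Real.sqrt (w j') : ℝ) : ℂ) = ((w j' : ℝ) : ℂ) := by
          rw [← Complex.ofReal_mul, Real.mul_self_sqrt (hw j')]
        rw [hGdef]
        dsimp only
        rw [_root_.map_mul, Complex.conj_ofReal]
        push_cast
        linear_combination ((Real.sqrt (lam m.1) : ℂ))⁻¹ * ((Real.sqrt (lam m'.1) : ℂ))⁻¹ *
          Z m.1 j' * (starRingEnd ℂ) (Z m'.1 j') * hW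
      calc ∑ j', G m j' * Gᴴ j' m' = ∑ j', G m j' * (starRingEnd ℂ) (G m' j') :=
            Finset.sum_congr rfl fun j' _ => by rw [conjTranspose_apply]; rfl
        _ = (((Real.sqrt (lam m.1))⁻¹ * (Real.sqrt (lam m'.1))⁻¹ : ℝ) : ℂ) *
              ∑ j', ((w j' : ℂ) * ((starRingEnd ℂ) (Z m'.1 j')) * Z m.1 j') := by
            rw [Finset.mul_sum]
            exact Finset.sum_congr rfl fun j' _ => hterm j'
        _ = if m = m' then 1 else 0 := by
            rw [fact2 m'.1 m.1]
            by_cases hmm : m = m'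
            · subst hmm
              rw [if_pos rfl, if_pos rfl]
              have h1 : Real.sqrt (lam m.1) * Real.sqrt (lam m.1) = lam m.1 :=
                Real.mul_self_sqrt (hlam m.1)
              have hs : Real.sqrt (lam m.1) ≠ 0 := fun h0 => m.2 (by rw [← h1, h0, mul_zero])
              have hkey : ((Real.sqrt (lam m.1))⁻¹ * (Real.sqrt (lam m.1))⁻¹ * lam m.1 : ℝ) = 1 := by
                field_simp
                linarith [h1]
              exact_mod_cast hkey
            · rw [if_neg (fun h : m.1 = m'.1 => hmm (Subtype.ext h)), if_neg hmm, mul_zero]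
    set P : Matrix (Fin M) (Fin M) ℂ := Gᴴ * G with hPdef
    have hP2 : P * P = P := by
      rw [hPdef, Matrix.mul_assoc, ← Matrix.mul_assoc G, hGG, Matrix.one_mul]
    have hPH : Pᴴ = P := by
      rw [hPdef, conjTranspose_mul, conjTranspose_conjTranspose]
    have hPjj : ∀ j', (P j' j' : ℂ) = ((∑ m : {m : κ // lam m ≠ 0}, Complex.normSq (G m j') : ℝ) : ℂ) := by
      intro j'
      rw [hPdef, Matrix.mul_apply, Complex.ofReal_sum]
      exact Finset.sum_congr rfl fun m _ => by
        rw [conjTranspose_apply, Complex.normSq_eq_conj_mul_self]; rfl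
    set r : ℝ := ∑ m : {m : κ // lam m ≠ 0}, Complex.normSq (G m j) with hrdef
    have hr0 : 0 ≤ r := Finset.sum_nonneg fun m _ => Complex.normSq_nonneg _
    have hrr : r ^ 2 ≤ r := by
      have h1 : (r : ℂ) = ∑ l, P j l * (starRingEnd ℂ) (P j l) := by
        rw [← hPjj j]
        conv_lhs => rw [← hP2]
        rw [Matrix.mul_apply]
        refine Finset.sum_congr rfl fun l _ => ?_
        congr 1
        have := congrFun (congrFun hPH l) j
        rw [conjTranspose_apply] at this
        exact this.symm
      have h2 : r = ∑ l, Complex.normSq (P j l) := by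
        have : ((∑ l, Complex.normSq (P j l) : ℝ) : ℂ) = ∑ l, P j l * (starRingEnd ℂ) (P j l) := by
          rw [Complex.ofReal_sum]
          exact Finset.sum_congr rfl fun l _ => by
            rw [Complex.normSq_eq_conj_mul_self]; ring
        exact_mod_cast h1.trans this.symm
      have h3 : Complex.normSq (P j j) ≤ ∑ l, Complex.normSq (P j l) :=
        Finset.single_le_sum (fun l _ => Complex.normSq_nonneg _) (Finset.mem_univ j)
      have h4 : Complex.normSq (P j j) = r ^ 2 := by
        rw [hPjj j, ← hrdef, Complex.normSq_ofReal, sq]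
      rw [← h2] at h3
      rw [← h4]
      exact h3
    have hrle : r ≤ 1 := by nlinarith [hrr, hr0]
    have hdr : ∑ m, d j m = r := by
      have step1 : ∑ m, d j m = ∑ m ∈ Finset.univ.filter (fun m => lam m ≠ 0), d j m := by
        refine (Finset.sum_filter_of_ne ?_).symm
        intro m _ hdm
        intro hlm
        exact hdm (by rw [hddef]; dsimp only; rw [if_pos hlm])
      have step2 : ∑ m ∈ Finset.univ.filter (fun m => lam m ≠ 0), d j m
          = ∑ m : {m : κ // lam m ≠ 0}, d j m.1 := by
        refine Finset.sum_subtype _ (fun m => ?_) (d j)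
        simp
      have step3 : ∀ m : {m : κ // lam m ≠ 0}, d j m.1 = Complex.normSq (G m j) := by
        intro m
        rw [hGdef]
        dsimp only
        rw [Complex.normSq_mul, Complex.normSq_ofReal, hddef]
        dsimp only
        rw [if_neg m.2, hcdef]
        dsimp only
        have h1 : Real.sqrt (lam m.1) * Real.sqrt (lam m.1) = lam m.1 :=
          Real.mul_self_sqrt (hlam m.1)
        have h2 : Real.sqrt (w j) * Real.sqrt (w j) = w j := Real.mul_self_sqrt (hw j)
        have key : ((Real.sqrt (lam m.1))⁻¹ * Real.sqrt (w j)) * ((Real.sqrt (lam m.1))⁻¹ * Real.sqrt (w j)) = w j / lam m.1 := by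
          rw [mul_mul_mul_comm, ← mul_inv, h1, h2, inv_mul_eq_div]
        rw [key, div_mul_eq_mul_div]
      rw [step1, step2, hrdef]
      exact Finset.sum_congr rfl fun m _ => step3 m
    rw [hdr]
    exact hrle
  -- Jensen and conclusion
  have hjw : ∀ j, ∑ m, d j m * lam m = w j := by
    intro j
    rw [← hsumc j]
    exact Finset.sum_congr rfl fun m _ => hld j m
  calc ∑ m, Real.negMulLog (lam m) = ∑ m, (∑ j, d j m) * Real.negMulLog (lam m) := by
        refine Finset.sum_congr rfl fun m _ => ?_
        by_cases hm : lam m = 0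
        · rw [hm, Real.negMulLog_zero, mul_zero]
        · rw [hsumd m hm, one_mul]
    _ = ∑ j, ∑ m, d j m * Real.negMulLog (lam m) := by
        rw [Finset.sum_comm]
        exact Finset.sum_congr rfl fun j _ => by rw [Finset.sum_mul]
    _ ≤ ∑ j, Real.negMulLog (w j) := by
        refine Finset.sum_le_sum fun j _ => ?_
        have h := jensen_sub_s13 (d j) lam (hd0 j) (bessel j) hlam
        rwa [hjw j] at h

private def emb {k : ℕ} (n : Fin k → ℕ) (i : Fin k) (ψ : Fin (n i) → ℂ) :
    (Σ i' : Fin k, Fin (n i')) → ℂ :=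
  fun x => if h : x.1 = i then ψ (h ▸ x.2) else 0

private lemma emb_mk_self {k : ℕ} {n : Fin k → ℕ} (i : Fin k) (ψ : Fin (n i) → ℂ)
    (a : Fin (n i)) : emb n i ψ ⟨i, a⟩ = ψ a := dif_pos rfl

private lemma emb_mk_ne {k : ℕ} {n : Fin k → ℕ} {i i' : Fin k} (h : i' ≠ i)
    (ψ : Fin (n i) → ℂ) (a : Fin (n i')) : emb n i ψ ⟨i', a⟩ = 0 := dif_neg h

private lemma emb_eq_zero {k : ℕ} {n : Fin k → ℕ} {i : Fin k} {x : Σ i', Fin (n i')}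
    (h : x.1 ≠ i) (ψ : Fin (n i) → ℂ) : emb n i ψ x = 0 := dif_neg h

/-- summing a binary function of two embedded vectors over the big index -/
private lemma sum_emb2 {k : ℕ} {n : Fin k → ℕ} {α : Type*} [AddCommMonoid α]
    (i : Fin k) (ψ ψ' : Fin (n i) → ℂ) (g : ℂ → ℂ → α) (hg : g 0 0 = 0) :
    ∑ x : Σ i', Fin (n i'), g (emb n i ψ x) (emb n i ψ' x) = ∑ a, g (ψ a) (ψ' a) := by
  rw [← Finset.univ_sigma_univ, Finset.sum_sigma]
  rw [Finset.sum_eq_single i]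
  · exact Finset.sum_congr rfl fun a _ => by rw [emb_mk_self, emb_mk_self]
  · intro i' _ hne
    refine Finset.sum_eq_zero fun a _ => ?_
    rw [emb_mk_ne hne, emb_mk_ne hne, hg]
  · intro h; exact absurd (Finset.mem_univ i) h

/-- entry of a one-block pure matrix -/
private lemma blockDiag_pure_entry {k : ℕ} {n : Fin k → ℕ} (i : Fin k) (ψ : Fin (n i) → ℂ)
    (x y : Σ i', Fin (n i')) :
    Matrix.blockDiagonal' (Function.update (fun i' => (0 : Matrix (Fin (n i')) (Fin (n i')) ℂ)) i
      (Matrix.vecMulVec ψ (star ψ))) x y = emb n i ψ x * (starRingEnd ℂ) (emb n i ψ y) := by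
  obtain ⟨i1, a⟩ := x
  obtain ⟨i2, c⟩ := y
  by_cases h : i1 = i2
  · subst h
    rw [blockDiagonal'_apply_eq]
    by_cases h2 : i1 = i
    · subst h2
      rw [Function.update_self, emb_mk_self, emb_mk_self]
      rfl
    · rw [Function.update_of_ne h2, emb_mk_ne h2, emb_mk_ne h2]
      simp
  · rw [blockDiagonal'_apply_ne _ _ _ h]
    by_cases h2 : i1 = i
    · have h3 : i2 ≠ i := fun hh => h (h2.trans hh.symm)
      rw [emb_mk_ne h3, map_zero, mul_zero]
    · rw [emb_mk_ne h2, zero_mul]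

/-- a pure-state decomposition sum as a matrix product `Y W Yᴴ` -/
private lemma decomp_eq_YWY {k : ℕ} {n : Fin k → ℕ} {M : ℕ} (w : Fin M → ℝ)
    (b : Fin M → Fin k) (φ : ∀ j, Fin (n (b j)) → ℂ) :
    (∑ j, (w j : ℂ) • Matrix.blockDiagonal'
        (Function.update (fun i => (0 : Matrix (Fin (n i)) (Fin (n i)) ℂ)) (b j)
          (Matrix.vecMulVec (φ j) (star (φ j)))))
    = (Matrix.of fun x j => emb n (b j) (φ j) x) * Matrix.diagonal (fun j => (w j : ℂ)) *
        (Matrix.of fun x j => emb n (b j) (φ j) x)ᴴ := by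
  ext x y
  rw [Matrix.sum_apply, Matrix.mul_apply]
  refine Finset.sum_congr rfl fun j _ => ?_
  rw [Matrix.smul_apply, smul_eq_mul, blockDiag_pure_entry, Matrix.mul_diagonal,
    conjTranspose_apply, Matrix.of_apply, Matrix.of_apply]
  show (w j : ℂ) * (emb n (b j) (φ j) x * (starRingEnd ℂ) (emb n (b j) (φ j) y))
      = emb n (b j) (φ j) x * (w j : ℂ) * (starRingEnd ℂ) (emb n (b j) (φ j) y)
  ring

/-- sum over the big (sigma) index of block-embedded rank-one terms, off-diagonal blocks -/
private lemma sum_sigma_emb_ne {k : ℕ} {n : Fin k → ℕ}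
    (v : ∀ z : Σ i, Fin (n i), Fin (n z.1) → ℂ) (C : (Σ i, Fin (n i)) → ℂ)
    {x y : Σ i, Fin (n i)} (hxy : x.1 ≠ y.1) :
    ∑ z : Σ i, Fin (n i), emb n z.1 (v z) x * C z * (starRingEnd ℂ) (emb n z.1 (v z) y) = 0 := by
  refine Finset.sum_eq_zero fun z _ => ?_
  by_cases h : x.1 = z.1
  · have h2 : y.1 ≠ z.1 := fun hh => hxy (h.trans hh.symm)
    rw [emb_eq_zero h2, map_zero, mul_zero]
  · rw [emb_eq_zero h, zero_mul, zero_mul]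

/-- same-block version -/
private lemma sum_sigma_emb_eq {k : ℕ} {n : Fin k → ℕ}
    (v : ∀ z : Σ i, Fin (n i), Fin (n z.1) → ℂ) (C : (Σ i, Fin (n i)) → ℂ)
    (i : Fin k) (a c : Fin (n i)) :
    ∑ z : Σ i, Fin (n i), emb n z.1 (v z) ⟨i, a⟩ * C z * (starRingEnd ℂ) (emb n z.1 (v z) ⟨i, c⟩)
    = ∑ m, v ⟨i, m⟩ a * C ⟨i, m⟩ * (starRingEnd ℂ) (v ⟨i, m⟩ c) := by
  rw [← Finset.univ_sigma_univ, Finset.sum_sigma]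
  rw [Finset.sum_eq_single i]
  · exact Finset.sum_congr rfl fun m _ => by rw [emb_mk_self, emb_mk_self]
  · intro i' _ hne
    refine Finset.sum_eq_zero fun m _ => ?_
    rw [emb_mk_ne (Ne.symm hne), zero_mul, zero_mul]
  · intro h; exact absurd (Finset.mem_univ i) h

private lemma spectral_package {N : ℕ} (A : Matrix (Fin N) (Fin N) ℂ)
    (hA : A.PosSemidef) (htr : A.trace = 1) :
    ∃ (lam : Fin N → ℝ) (u : Matrix (Fin N) (Fin N) ℂ),
      (∀ m, 0 ≤ lam m) ∧ (∑ m, lam m = 1) ∧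
      (u * uᴴ = 1) ∧ (uᴴ * u = 1) ∧
      (A = u * Matrix.diagonal (fun m => (lam m : ℂ)) * uᴴ) ∧
      (vonNeumannEntropy A = ∑ m, Real.negMulLog (lam m)) := by
  have hH : A.IsHermitian := hA.1
  set u : Matrix (Fin N) (Fin N) ℂ := (hH.eigenvectorUnitary : Matrix (Fin N) (Fin N) ℂ) with hu
  have hu1 : u * uᴴ = 1 := by
    rw [← Matrix.star_eq_conjTranspose]
    exact (Unitary.mem_iff.mp hH.eigenvectorUnitary.2).2
  have hu2 : uᴴ * u = 1 := by
    rw [← Matrix.star_eq_conjTranspose]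
    exact (Unitary.mem_iff.mp hH.eigenvectorUnitary.2).1
  have hspec : A = u * Matrix.diagonal (fun m => ((hH.eigenvalues m : ℝ) : ℂ)) * uᴴ := by
    have h := hH.spectral_theorem
    rw [Unitary.conjStarAlgAut_apply] at h
    rw [← Matrix.star_eq_conjTranspose]
    exact h
  have hsum : ∑ m, hH.eigenvalues m = 1 := by
    have h1 : A.trace = ∑ m, ((hH.eigenvalues m : ℝ) : ℂ) := by
      conv_lhs => rw [hspec]
      rw [Matrix.trace_mul_cycle, hu2, Matrix.one_mul, Matrix.trace_diagonal]
    rw [htr] at h1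
    exact_mod_cast h1.symm
  refine ⟨hH.eigenvalues, u, fun m => hA.eigenvalues_nonneg m, hsum, hu1, hu2, hspec, ?_⟩
  rw [vonNeumannEntropy, dif_pos hH, ← Finset.sum_neg_distrib]
  exact Finset.sum_congr rfl fun m _ => by rw [Real.negMulLog]; ring

private lemma shannon_eq {m : ℕ} (q : Fin m → ℝ) :
    shannonEntropy q = ∑ j, Real.negMulLog (q j) := by
  rw [shannonEntropy, ← Finset.sum_neg_distrib]
  exact Finset.sum_congr rfl fun j _ => by rw [Real.negMulLog]; ring

/-- For a block-diagonal density matrix `ρ = ⊕_i p_i·ρ_i`, the infimum of the Shannon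
entropies of the weights over all decompositions of `ρ` into pure states of the block
algebra is attained, and equals `H(p) + Σ_i p_i · S_VN(ρ_i)`. -/
theorem isLeast_shannonEntropy_block_pure_decompositions
    (k : ℕ) (n : Fin k → ℕ)
    (p : Fin k → ℝ) (hp0 : ∀ i, 0 ≤ p i) (hp1 : ∑ i, p i = 1)
    (ρs : ∀ i, Matrix (Fin (n i)) (Fin (n i)) ℂ)
    (hρs : ∀ i, (ρs i).PosSemidef ∧ (ρs i).trace = 1)
    (ρ : Matrix (Σ i : Fin k, Fin (n i)) (Σ i : Fin k, Fin (n i)) ℂ)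
    (hρ : ρ = Matrix.blockDiagonal' fun i => (p i : ℂ) • ρs i) :
    IsLeast
      {x : ℝ | ∃ (M : ℕ) (w : Fin M → ℝ) (b : Fin M → Fin k) (φ : ∀ j, Fin (n (b j)) → ℂ),
        (∀ j, 0 ≤ w j) ∧ (∑ j, w j = 1) ∧ (∀ j, ∑ a, ‖φ j a‖ ^ 2 = 1) ∧
        ρ = ∑ j, (w j : ℂ) •
          Matrix.blockDiagonal'
            (Function.update (fun i => (0 : Matrix (Fin (n i)) (Fin (n i)) ℂ)) (b j)
              (Matrix.vecMulVec (φ j) (star (φ j)))) ∧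
        x = shannonEntropy w}
      (shannonEntropy p + ∑ i, p i * vonNeumannEntropy (ρs i)) := by
  classical
  choose lam u hlam0 hlamsum huu huu' hspec hvn using
    fun i => spectral_package (ρs i) (hρs i).1 (hρs i).2
  -- entrywise spectral theorem
  have hspec' : ∀ i a c, ρs i a c
      = ∑ m, u i a m * ((lam i m : ℝ) : ℂ) * (starRingEnd ℂ) (u i c m) := by
    intro i a c
    conv_lhs => rw [hspec i]
    rw [Matrix.mul_apply]
    exact Finset.sum_congr rfl fun m _ => by
      rw [Matrix.mul_diagonal, conjTranspose_apply]; rfl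
  -- column orthonormality, entrywise
  have hcol : ∀ i m m', ∑ a, (starRingEnd ℂ) (u i a m) * u i a m'
      = if m = m' then 1 else 0 := by
    intro i m m'
    have h := congrFun (congrFun (huu' i) m) m'
    rw [Matrix.mul_apply, Matrix.one_apply] at h
    rw [← h]
    exact Finset.sum_congr rfl fun a _ => by rw [conjTranspose_apply]; rfl
  -- row completeness, entrywise
  have hrow : ∀ i a c, ∑ m, u i a m * (starRingEnd ℂ) (u i c m)
      = if a = c then 1 else 0 := by
    intro i a c
    have h := congrFun (congrFun (huu i) a) c
    rw [Matrix.mul_apply, Matrix.one_apply] at h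
    rw [← h]
    exact Finset.sum_congr rfl fun m _ => by rw [conjTranspose_apply]; rfl
  -- the big eigen-data
  set Lam : (Σ i : Fin k, Fin (n i)) → ℝ := fun z => p z.1 * lam z.1 z.2 with hLam
  set X : Matrix (Σ i : Fin k, Fin (n i)) (Σ i : Fin k, Fin (n i)) ℂ :=
    Matrix.of (fun x z => emb n z.1 (fun a => u z.1 a z.2) x) with hX
  have hLam0 : ∀ z, 0 ≤ Lam z := fun z => mul_nonneg (hp0 _) (hlam0 _ _)
  have hXXH : X * Xᴴ = 1 := by
    ext x y
    rw [Matrix.mul_apply]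
    have hR : ∑ z, X x z * Xᴴ z y
        = ∑ z : Σ i, Fin (n i), emb n z.1 (fun a => u z.1 a z.2) x * (1 : ℂ) *
            (starRingEnd ℂ) (emb n z.1 (fun a => u z.1 a z.2) y) := by
      refine Finset.sum_congr rfl fun z _ => ?_
      rw [mul_one, conjTranspose_apply]
      rfl
    rw [hR]
    obtain ⟨i1, a⟩ := x
    obtain ⟨i2, c⟩ := y
    by_cases h : i1 = i2
    · subst h
      rw [sum_sigma_emb_eq (fun z => fun a => u z.1 a z.2) (fun _ => (1 : ℂ)) i1 a c]
      have h2 : ∑ m, u i1 a m * (1 : ℂ) * (starRingEnd ℂ) (u i1 c m)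
          = if a = c then 1 else 0 := by
        rw [← hrow i1 a c]
        exact Finset.sum_congr rfl fun m _ => by rw [mul_one]
      rw [h2, Matrix.one_apply]
      by_cases hac : a = c
      · subst hac; rw [if_pos rfl, if_pos rfl]
      · rw [if_neg hac, if_neg (show (⟨i1, a⟩ : Σ i, Fin (n i)) ≠ ⟨i1, c⟩ from
          fun hh => hac (by cases hh; rfl))]
    · rw [sum_sigma_emb_ne _ _ h, Matrix.one_apply]
      have hne : (⟨i1, a⟩ : Σ i, Fin (n i)) ≠ ⟨i2, c⟩ := fun hh => h (by cases hh; rfl)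
      rw [if_neg hne]
  have hXHX : Xᴴ * X = 1 := by
    ext z z'
    rw [Matrix.mul_apply]
    by_cases h : z.1 = z'.1
    · obtain ⟨i, m⟩ := z
      obtain ⟨i', m'⟩ := z'
      replace h : i = i' := h
      subst h
      have hs : ∑ xx, Xᴴ (⟨i, m⟩ : Σ i, Fin (n i)) xx * X xx ⟨i, m'⟩
          = ∑ a, (starRingEnd ℂ) (u i a m) * u i a m' := by
        rw [show (∑ xx, Xᴴ (⟨i, m⟩ : Σ i, Fin (n i)) xx * X xx ⟨i, m'⟩)
            = ∑ xx, (fun zz ww => (starRingEnd ℂ) zz * ww) (emb n i (fun a => u i a m) xx)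
                (emb n i (fun a => u i a m') xx) from
          Finset.sum_congr rfl fun xx _ => by rw [conjTranspose_apply]; rfl]
        exact sum_emb2 i _ _ (fun zz ww => (starRingEnd ℂ) zz * ww) (by simp)
      rw [hs, hcol i m m', Matrix.one_apply]
      by_cases hmm : m = m'
      · subst hmm; rw [if_pos rfl, if_pos rfl]
      · rw [if_neg hmm, if_neg (show (⟨i, m⟩ : Σ i, Fin (n i)) ≠ ⟨i, m'⟩ from
          fun hh => hmm (by cases hh; rfl))]
    · rw [Matrix.one_apply]
      have hne : z ≠ z' := fun hh => h (by rw [hh])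
      rw [if_neg hne]
      refine Finset.sum_eq_zero fun xx _ => ?_
      by_cases h1 : xx.1 = z.1
      · have h2 : xx.1 ≠ z'.1 := fun hh => h (h1.symm.trans hh)
        have hz : X xx z' = 0 := emb_eq_zero h2 (fun a => u z'.1 a z'.2)
        rw [hz, mul_zero]
      · have hz : X xx z = 0 := emb_eq_zero h1 (fun a => u z.1 a z.2)
        rw [conjTranspose_apply, hz, star_zero, zero_mul]
  have hρX : ρ = X * Matrix.diagonal (fun z => ((Lam z : ℝ) : ℂ)) * Xᴴ := by
    rw [hρ]
    ext x y
    have hR : (X * Matrix.diagonal (fun z => ((Lam z : ℝ) : ℂ)) * Xᴴ) x y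
        = ∑ z : Σ i, Fin (n i), emb n z.1 (fun a => u z.1 a z.2) x * ((Lam z : ℝ) : ℂ) *
            (starRingEnd ℂ) (emb n z.1 (fun a => u z.1 a z.2) y) := by
      rw [Matrix.mul_apply]
      exact Finset.sum_congr rfl fun z _ => by
        rw [Matrix.mul_diagonal, conjTranspose_apply]; rfl
    rw [hR]
    obtain ⟨i1, a⟩ := x
    obtain ⟨i2, c⟩ := y
    by_cases h : i1 = i2
    · subst h
      rw [blockDiagonal'_apply_eq,
        sum_sigma_emb_eq (fun z => fun a => u z.1 a z.2) (fun z => ((Lam z : ℝ) : ℂ)) i1 a c]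
      rw [Matrix.smul_apply, smul_eq_mul, hspec' i1 a c, Finset.mul_sum]
      refine Finset.sum_congr rfl fun m _ => ?_
      rw [hLam]
      dsimp only
      rw [Complex.ofReal_mul]
      ring
    · rw [blockDiagonal'_apply_ne _ _ _ h, sum_sigma_emb_ne _ _ h]
  -- the value of the target
  have hT : shannonEntropy p + ∑ i, p i * vonNeumannEntropy (ρs i)
      = ∑ z : Σ i, Fin (n i), Real.negMulLog (Lam z) := by
    rw [← Finset.univ_sigma_univ, Finset.sum_sigma]
    have hblock : ∀ i, ∑ m, Real.negMulLog (Lam ⟨i, m⟩)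
        = Real.negMulLog (p i) + p i * vonNeumannEntropy (ρs i) := by
      intro i
      rw [hvn i]
      calc ∑ m, Real.negMulLog (Lam ⟨i, m⟩)
          = ∑ m, (lam i m * Real.negMulLog (p i) + p i * Real.negMulLog (lam i m)) := by
            refine Finset.sum_congr rfl fun m _ => ?_
            rw [hLam]
            exact Real.negMulLog_mul (p i) (lam i m)
        _ = (∑ m, lam i m) * Real.negMulLog (p i) + p i * ∑ m, Real.negMulLog (lam i m) := by
            rw [Finset.sum_add_distrib, ← Finset.sum_mul, ← Finset.mul_sum]
        _ = Real.negMulLog (p i) + p i * ∑ m, Real.negMulLog (lam i m) := by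
            rw [hlamsum i, one_mul]
    rw [Finset.sum_congr rfl fun i _ => hblock i, Finset.sum_add_distrib, shannon_eq]
  constructor
  · -- membership: the eigen-decomposition
    set M := Fintype.card (Σ i : Fin k, Fin (n i)) with hM
    set eqv : Fin M ≃ (Σ i : Fin k, Fin (n i)) := (Fintype.equivFin _).symm with heqv
    refine ⟨M, fun j => Lam (eqv j), fun j => (eqv j).1,
      fun j => fun a => u (eqv j).1 a (eqv j).2, fun j => hLam0 _, ?_, ?_, ?_, ?_⟩
    · rw [Equiv.sum_comp eqv Lam, ← Finset.univ_sigma_univ, Finset.sum_sigma]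
      calc ∑ i, ∑ m, Lam ⟨i, m⟩ = ∑ i, p i := by
            refine Finset.sum_congr rfl fun i _ => ?_
            rw [hLam]
            dsimp only
            rw [← Finset.mul_sum, hlamsum i, mul_one]
        _ = 1 := hp1
    · intro j
      have h := hcol (eqv j).1 (eqv j).2 (eqv j).2
      rw [if_pos rfl] at h
      have h2 : ((∑ a, ‖u (eqv j).1 a (eqv j).2‖ ^ 2 : ℝ) : ℂ) = 1 := by
        rw [Complex.ofReal_sum, ← h]
        refine Finset.sum_congr rfl fun a _ => ?_
        rw [← Complex.normSq_eq_conj_mul_self, Complex.sq_norm]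
      exact_mod_cast h2
    · rw [decomp_eq_YWY, hρX]
      ext x y
      rw [Matrix.mul_apply, Matrix.mul_apply,
        ← Equiv.sum_comp eqv (fun z => (X * Matrix.diagonal (fun z' => ((Lam z' : ℝ) : ℂ))) x z * Xᴴ z y)]
      refine Finset.sum_congr rfl fun j _ => ?_
      rw [Matrix.mul_diagonal, Matrix.mul_diagonal, conjTranspose_apply, conjTranspose_apply]
      rfl
    · rw [hT, shannon_eq]
      exact (Equiv.sum_comp eqv fun z => Real.negMulLog (Lam z)).symm
  · -- lower bound
    rintro x ⟨M, w, b, φ, hw0, hw1, hφn, hdecomp, hxval⟩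
    rw [hT, hxval, shannon_eq w]
    refine keyIneq X Lam hLam0 hXXH hXHX w hw0
      (Matrix.of fun xx j => emb n (b j) (φ j) xx) ?_ ?_
    · intro j
      rw [Matrix.mul_apply]
      have hs : ∑ xx, (Matrix.of fun xx j => emb n (b j) (φ j) xx)ᴴ j xx *
            (Matrix.of fun xx j => emb n (b j) (φ j) xx) xx j
          = ∑ a, (starRingEnd ℂ) (φ j a) * φ j a := by
        rw [show (∑ xx, (Matrix.of fun xx j => emb n (b j) (φ j) xx)ᴴ j xx *
              (Matrix.of fun xx j => emb n (b j) (φ j) xx) xx j)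
            = ∑ xx, (fun zz ww => (starRingEnd ℂ) zz * ww) (emb n (b j) (φ j) xx)
                (emb n (b j) (φ j) xx) from
          Finset.sum_congr rfl fun xx _ => by rw [conjTranspose_apply]; rfl]
        exact sum_emb2 (b j) _ _ (fun zz ww => (starRingEnd ℂ) zz * ww) (by simp)
      rw [hs]
      have h2 : ((∑ a, ‖φ j a‖ ^ 2 : ℝ) : ℂ) = ∑ a, (starRingEnd ℂ) (φ j a) * φ j a := by
        rw [Complex.ofReal_sum]
        refine Finset.sum_congr rfl fun a _ => ?_
        rw [← Complex.normSq_eq_conj_mul_self, Complex.sq_norm]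
      rw [← h2, hφn j, Complex.ofReal_one]
    · rw [← hρX, hdecomp, decomp_eq_YWY]
end

section
/- (Strict concavity of von Neumann entropy.) Let ρ and σ be n×n complex density matrices and λ ∈ (0,1). Then S_VN(λρ + (1−λ)σ) ≥ λ·S_VN(ρ) + (1−λ)·S_VN(σ), with equality if and only if ρ = σ. -/
open Matrix
open scoped ComplexOrder

open Matrix
open scoped ComplexOrder

lemma vne_eq {ι : Type*} [Fintype ι] [DecidableEq ι] {ρ : Matrix ι ι ℂ}
    (h : ρ.IsHermitian) :
    vonNeumannEntropy ρ = ∑ i, Real.negMulLog (h.eigenvalues i) := by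
  classical
  rw [vonNeumannEntropy, dif_pos h]
  simp [Real.negMulLog, neg_mul, Finset.sum_neg_distrib]

/-- Key helper: weights from the unitary change of basis. -/
lemma vne_helper (n : ℕ) (ρ τ : Matrix (Fin n) (Fin n) ℂ)
    (hρ : ρ.PosSemidef) (hτ : τ.IsHermitian) :
    ∃ w : Fin n → Fin n → ℝ,
      (∀ i j, 0 ≤ w i j) ∧ (∀ j, ∑ i, w i j = 1) ∧ (∀ i, ∑ j, w i j = 1) ∧
      (∀ j, (star (hτ.eigenvectorUnitary : Matrix (Fin n) (Fin n) ℂ) * ρ *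
        (hτ.eigenvectorUnitary : Matrix (Fin n) (Fin n) ℂ)) j j
          = ((∑ i, w i j * hρ.1.eigenvalues i : ℝ) : ℂ)) ∧
      (∀ a : Fin n → ℝ, (∀ i j, w i j ≠ 0 → hρ.1.eigenvalues i = a j) →
        ρ * (hτ.eigenvectorUnitary : Matrix (Fin n) (Fin n) ℂ)
          = (hτ.eigenvectorUnitary : Matrix (Fin n) (Fin n) ℂ)
              * diagonal (fun j => ((a j : ℝ) : ℂ))) := by
  set V : Matrix (Fin n) (Fin n) ℂ := (hρ.1.eigenvectorUnitary : Matrix (Fin n) (Fin n) ℂ)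
  set U : Matrix (Fin n) (Fin n) ℂ := (hτ.eigenvectorUnitary : Matrix (Fin n) (Fin n) ℂ)
  set W : Matrix (Fin n) (Fin n) ℂ := star V * U with hW
  have hVs : star V * V = 1 := Unitary.coe_star_mul_self hρ.1.eigenvectorUnitary
  have hVs' : V * star V = 1 := Unitary.coe_mul_star_self hρ.1.eigenvectorUnitary
  have hUs : star U * U = 1 := Unitary.coe_star_mul_self hτ.eigenvectorUnitary
  have hUs' : U * star U = 1 := Unitary.coe_mul_star_self hτ.eigenvectorUnitary
  have hWstar : star W = star U * V := by
    rw [hW, StarMul.star_mul, star_star]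
  have hWW : star W * W = 1 := by
    rw [hWstar, hW, mul_assoc, ← mul_assoc V, hVs', one_mul, hUs]
  have hWW' : W * star W = 1 := by
    rw [hWstar, hW, mul_assoc, ← mul_assoc U, hUs', one_mul, hVs]
  set p : Fin n → ℝ := hρ.1.eigenvalues with hp
  set D : Matrix (Fin n) (Fin n) ℂ := diagonal (fun i => ((p i : ℝ) : ℂ)) with hD
  have hspec : ρ = V * D * star V := by
    have := hρ.1.spectral_theorem
    rw [Unitary.conjStarAlgAut_apply] at this
    exact this
  refine ⟨fun i j => ‖W i j‖ ^ 2, fun i j => by positivity, ?_, ?_, ?_, ?_⟩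
  · intro j
    have h1 : (star W * W) j j = 1 := by rw [hWW]; simp
    rw [Matrix.mul_apply] at h1
    have h2 : ∀ i, (star W) j i * W i j = ((‖W i j‖ ^ 2 : ℝ) : ℂ) := by
      intro i
      rw [Matrix.star_apply, RCLike.star_def, RCLike.conj_mul]
      norm_cast
    rw [Finset.sum_congr rfl (fun i _ => h2 i)] at h1
    exact_mod_cast h1
  · intro i
    have h1 : (W * star W) i i = 1 := by rw [hWW']; simp
    rw [Matrix.mul_apply] at h1
    have h2 : ∀ j, W i j * (star W) j i = ((‖W i j‖ ^ 2 : ℝ) : ℂ) := by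
      intro j
      rw [Matrix.star_apply, RCLike.star_def, mul_comm, RCLike.conj_mul]
      norm_cast
    rw [Finset.sum_congr rfl (fun j _ => h2 j)] at h1
    exact_mod_cast h1
  · intro j
    have hrew : star U * ρ * U = star W * D * W := by
      rw [hspec, hWstar, hW]
      simp only [mul_assoc]
    rw [hrew]
    rw [Matrix.mul_apply]
    have h2 : ∀ i, (star W * D) j i * W i j = ((‖W i j‖ ^ 2 * p i : ℝ) : ℂ) := by
      intro i
      rw [Matrix.mul_diagonal, Matrix.star_apply, RCLike.star_def,
        mul_comm ((starRingEnd ℂ) (W i j)) _, mul_assoc, RCLike.conj_mul]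
      push_cast
      ring_nf
      rfl
    rw [Finset.sum_congr rfl (fun i _ => h2 i)]
    norm_cast
  · intro a ha
    have hDW : D * W = W * diagonal (fun j => ((a j : ℝ) : ℂ)) := by
      ext i j
      rw [Matrix.diagonal_mul, Matrix.mul_diagonal]
      by_cases h : W i j = 0
      · simp [h]
      · have : p i = a j := ha i j (by simpa using h)
        rw [this, mul_comm]
    calc ρ * U = V * D * (star V * U) := by rw [hspec]; noncomm_ring
      _ = V * (D * W) := by rw [hW, mul_assoc]
      _ = V * (star V * U) * diagonal (fun j => ((a j : ℝ) : ℂ)) := by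
          rw [hDW, hW]; noncomm_ring
      _ = U * diagonal (fun j => ((a j : ℝ) : ℂ)) := by
          rw [← mul_assoc, hVs', one_mul]

/-- **Strict concavity of the von Neumann entropy.**  For density matrices `ρ, σ` and
`l ∈ (0,1)`, `S_VN(l·ρ + (1−l)·σ) ≥ l·S_VN(ρ) + (1−l)·S_VN(σ)`, with equality if and
only if `ρ = σ`. -/
theorem vonNeumannEntropy_strictConcave
    (n : ℕ) (ρ σ : Matrix (Fin n) (Fin n) ℂ)
    (hρ : ρ.PosSemidef) (hρt : ρ.trace = 1)
    (hσ : σ.PosSemidef) (hσt : σ.trace = 1)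
    (l : ℝ) (hl : l ∈ Set.Ioo (0 : ℝ) 1) :
    l * vonNeumannEntropy ρ + (1 - l) * vonNeumannEntropy σ ≤
      vonNeumannEntropy ((l : ℂ) • ρ + ((1 - l : ℝ) : ℂ) • σ) ∧
    (vonNeumannEntropy ((l : ℂ) • ρ + ((1 - l : ℝ) : ℂ) • σ) =
        l * vonNeumannEntropy ρ + (1 - l) * vonNeumannEntropy σ ↔ ρ = σ) := by
  classical
  obtain ⟨hl0, hl1⟩ := hl
  have hl1' : (0:ℝ) < 1 - l := by linarith
  have hρh := hρ.1
  have hσh := hσ.1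
  set τ : Matrix (Fin n) (Fin n) ℂ := (l : ℂ) • ρ + ((1 - l : ℝ) : ℂ) • σ with hτdef
  have hτh : τ.IsHermitian := by
    rw [hτdef, Matrix.IsHermitian, conjTranspose_add, conjTranspose_smul, conjTranspose_smul,
      hρh.eq, hσh.eq]
    simp [Complex.star_def, Complex.conj_ofReal]
  set p : Fin n → ℝ := hρh.eigenvalues with hpdef
  set q : Fin n → ℝ := hσh.eigenvalues with hqdef
  set μ : Fin n → ℝ := hτh.eigenvalues with hμdef
  have hp0 : ∀ i, 0 ≤ p i := hρ.eigenvalues_nonneg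
  have hq0 : ∀ i, 0 ≤ q i := hσ.eigenvalues_nonneg
  obtain ⟨w, hw0, hwcol, hwrow, hwdiag, hwrec⟩ := vne_helper n ρ τ hρ hτh
  obtain ⟨v, hv0, hvcol, hvrow, hvdiag, hvrec⟩ := vne_helper n σ τ hσ hτh
  set U : Matrix (Fin n) (Fin n) ℂ := (hτh.eigenvectorUnitary : Matrix (Fin n) (Fin n) ℂ)
    with hUdef
  set a : Fin n → ℝ := fun j => ∑ i, w i j * p i with hadef
  set b : Fin n → ℝ := fun j => ∑ i, v i j * q i with hbdef
  have ha0 : ∀ j, 0 ≤ a j := fun j =>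
    Finset.sum_nonneg fun i _ => mul_nonneg (hw0 i j) (hp0 i)
  have hb0 : ∀ j, 0 ≤ b j := fun j =>
    Finset.sum_nonneg fun i _ => mul_nonneg (hv0 i j) (hq0 i)
  -- the eigenvalue mixing identity
  have hμeq : ∀ j, μ j = l * a j + (1 - l) * b j := by
    intro j
    have h1 : (star U * τ * U) j j = ((μ j : ℝ) : ℂ) := by
      rw [hUdef, ← Unitary.conjStarAlgAut_star_apply (S := ℂ),
        hτh.conjStarAlgAut_star_eigenvectorUnitary]
      simp [Matrix.diagonal_apply_eq]
      rfl
    have h2 : star U * τ * U =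
        (l : ℂ) • (star U * ρ * U) + ((1 - l : ℝ) : ℂ) • (star U * σ * U) := by
      rw [hτdef]
      rw [Matrix.mul_add, Matrix.add_mul, Matrix.mul_smul, Matrix.smul_mul,
        Matrix.mul_smul, Matrix.smul_mul]
    have h3 : ((μ j : ℝ) : ℂ) = (l : ℂ) * ((a j : ℝ) : ℂ) + ((1 - l : ℝ) : ℂ) * ((b j : ℝ) : ℂ) := by
      rw [← h1, h2]
      rw [Matrix.add_apply, Matrix.smul_apply, Matrix.smul_apply, hwdiag j, hvdiag j]
      simp only [smul_eq_mul, hadef, hbdef]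
      rfl
    exact_mod_cast h3
  -- Jensen step A
  have hstepA : ∀ j, ∑ i, w i j * Real.negMulLog (p i) ≤ Real.negMulLog (a j) := by
    intro j
    have := Real.concaveOn_negMulLog.le_map_sum (t := Finset.univ) (w := fun i => w i j)
      (p := p) (fun i _ => hw0 i j) (hwcol j) (fun i _ => hp0 i)
    simpa [smul_eq_mul] using this
  have hstepA' : ∀ j, ∑ i, v i j * Real.negMulLog (q i) ≤ Real.negMulLog (b j) := by
    intro j
    have := Real.concaveOn_negMulLog.le_map_sum (t := Finset.univ) (w := fun i => v i j)
      (p := q) (fun i _ => hv0 i j) (hvcol j) (fun i _ => hq0 i)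
    simpa [smul_eq_mul] using this
  have hsumw : ∑ i, Real.negMulLog (p i) = ∑ j, ∑ i, w i j * Real.negMulLog (p i) := by
    rw [Finset.sum_comm]
    refine Finset.sum_congr rfl fun i _ => ?_
    rw [← Finset.sum_mul, hwrow i, one_mul]
  have hsumv : ∑ i, Real.negMulLog (q i) = ∑ j, ∑ i, v i j * Real.negMulLog (q i) := by
    rw [Finset.sum_comm]
    refine Finset.sum_congr rfl fun i _ => ?_
    rw [← Finset.sum_mul, hvrow i, one_mul]
  have hAρ : ∑ i, Real.negMulLog (p i) ≤ ∑ j, Real.negMulLog (a j) := by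
    rw [hsumw]; exact Finset.sum_le_sum fun j _ => hstepA j
  have hAσ : ∑ i, Real.negMulLog (q i) ≤ ∑ j, Real.negMulLog (b j) := by
    rw [hsumv]; exact Finset.sum_le_sum fun j _ => hstepA' j
  -- Jensen step B
  have hstepB : ∀ j, l * Real.negMulLog (a j) + (1 - l) * Real.negMulLog (b j) ≤
      Real.negMulLog (μ j) := by
    intro j
    have := Real.concaveOn_negMulLog.2 (ha0 j) (hb0 j) hl0.le hl1'.le (by ring)
    simpa [smul_eq_mul, hμeq j] using this
  have hB : ∑ j, (l * Real.negMulLog (a j) + (1 - l) * Real.negMulLog (b j)) ≤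
      ∑ j, Real.negMulLog (μ j) := Finset.sum_le_sum fun j _ => hstepB j
  have hBsum : ∑ j, (l * Real.negMulLog (a j) + (1 - l) * Real.negMulLog (b j)) =
      l * ∑ j, Real.negMulLog (a j) + (1 - l) * ∑ j, Real.negMulLog (b j) := by
    rw [Finset.sum_add_distrib, Finset.mul_sum, Finset.mul_sum]
  have hSρ : vonNeumannEntropy ρ = ∑ i, Real.negMulLog (p i) := vne_eq hρh
  have hSσ : vonNeumannEntropy σ = ∑ i, Real.negMulLog (q i) := vne_eq hσh
  have hSτ : vonNeumannEntropy τ = ∑ j, Real.negMulLog (μ j) := vne_eq hτh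
  have hmain : l * vonNeumannEntropy ρ + (1 - l) * vonNeumannEntropy σ ≤ vonNeumannEntropy τ := by
    rw [hSρ, hSσ, hSτ]
    have h1 : l * ∑ i, Real.negMulLog (p i) + (1 - l) * ∑ i, Real.negMulLog (q i) ≤
        l * ∑ j, Real.negMulLog (a j) + (1 - l) * ∑ j, Real.negMulLog (b j) := by
      have := mul_le_mul_of_nonneg_left hAρ hl0.le
      have := mul_le_mul_of_nonneg_left hAσ hl1'.le
      linarith
    rw [hBsum] at hB
    linarith
  refine ⟨hmain, ?_, ?_⟩
  · -- equality → ρ = σ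
    intro heq
    have hTA : l * ∑ j, Real.negMulLog (a j) + (1 - l) * ∑ j, Real.negMulLog (b j) ≤
        ∑ j, Real.negMulLog (μ j) := by rw [← hBsum]; exact hB
    have hSA : ∑ i, Real.negMulLog (p i) = ∑ j, Real.negMulLog (a j) := by
      rw [hSρ, hSσ, hSτ] at heq
      nlinarith [mul_le_mul_of_nonneg_left hAρ hl0.le, mul_le_mul_of_nonneg_left hAσ hl1'.le]
    have hSB : ∑ i, Real.negMulLog (q i) = ∑ j, Real.negMulLog (b j) := by
      rw [hSρ, hSσ, hSτ] at heq
      nlinarith [mul_le_mul_of_nonneg_left hAρ hl0.le, mul_le_mul_of_nonneg_left hAσ hl1'.le]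
    have hBeqsum : ∑ j, (l * Real.negMulLog (a j) + (1 - l) * Real.negMulLog (b j)) =
        ∑ j, Real.negMulLog (μ j) := by
      rw [hSρ, hSσ, hSτ] at heq
      rw [hBsum]
      have e1 : l * ∑ i, Real.negMulLog (p i) = l * ∑ j, Real.negMulLog (a j) := by rw [hSA]
      have e2 : (1 - l) * ∑ i, Real.negMulLog (q i) = (1 - l) * ∑ j, Real.negMulLog (b j) := by
        rw [hSB]
      linarith
    have hBeq : ∀ j, l * Real.negMulLog (a j) + (1 - l) * Real.negMulLog (b j) =
        Real.negMulLog (μ j) := by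
      intro j
      exact (Finset.sum_eq_sum_iff_of_le (fun j _ => hstepB j)).1 hBeqsum j (Finset.mem_univ j)
    -- a = b by strict concavity
    have hab : ∀ j, a j = b j := by
      intro j
      by_contra hne
      have := Real.strictConcaveOn_negMulLog.2 (ha0 j) (hb0 j) hne hl0 hl1' (by ring)
      rw [smul_eq_mul, smul_eq_mul, smul_eq_mul, smul_eq_mul, ← hμeq j] at this
      exact absurd (hBeq j) (ne_of_lt this)
    -- per-column equality in step A for ρ
    have hAeqρ : ∀ j, ∑ i, w i j * Real.negMulLog (p i) = Real.negMulLog (a j) := by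
      intro j
      have hsum : ∑ j, ∑ i, w i j * Real.negMulLog (p i) = ∑ j, Real.negMulLog (a j) := by
        rw [← hsumw, hSA]
      exact (Finset.sum_eq_sum_iff_of_le (fun j _ => hstepA j)).1 hsum j (Finset.mem_univ j)
    have hAeqσ : ∀ j, ∑ i, v i j * Real.negMulLog (q i) = Real.negMulLog (b j) := by
      intro j
      have hsum : ∑ j, ∑ i, v i j * Real.negMulLog (q i) = ∑ j, Real.negMulLog (b j) := by
        rw [← hsumv, hSB]
      exact (Finset.sum_eq_sum_iff_of_le (fun j _ => hstepA' j)).1 hsum j (Finset.mem_univ j)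
    -- eigenvalue constancy on support
    have hkeyρ : ∀ i j, w i j ≠ 0 → p i = a j := by
      intro i j hij
      set t : Finset (Fin n) := Finset.univ.filter (fun k => w k j ≠ 0) with htdef
      have hit : i ∈ t := by simp [htdef, hij]
      have hwt : ∑ k ∈ t, w k j = 1 := by
        rw [← hwcol j]
        exact Finset.sum_subset (Finset.filter_subset _ _)
          (fun k _ hk => by simpa [htdef] using hk)
      have hat : ∑ k ∈ t, w k j * p k = a j := by
        rw [hadef]
        exact Finset.sum_subset (Finset.filter_subset _ _)
          (fun k _ hk => by simp [htdef] at hk; simp [hk])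
      have hft : ∑ k ∈ t, w k j * Real.negMulLog (p k) = Real.negMulLog (a j) := by
        rw [← hAeqρ j]
        exact Finset.sum_subset (Finset.filter_subset _ _)
          (fun k _ hk => by simp [htdef] at hk; simp [hk])
      have hconst := Real.strictConcaveOn_negMulLog.eq_of_map_sum_eq (t := t)
        (w := fun k => w k j) (p := p)
        (fun k hk => lt_of_le_of_ne (hw0 k j) (by simp [htdef] at hk; exact Ne.symm hk))
        hwt (fun k _ => hp0 k)
        (by rw [show ∑ k ∈ t, w k j • p k = a j by simpa [smul_eq_mul] using hat]
            simp only [smul_eq_mul]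
            rw [hft])
      have : a j = p i := by
        calc a j = ∑ k ∈ t, w k j * p k := hat.symm
          _ = ∑ k ∈ t, w k j * p i := Finset.sum_congr rfl fun k hk => by
              rw [hconst hk hit]
          _ = p i := by rw [← Finset.sum_mul, hwt, one_mul]
      exact this.symm
    have hkeyσ : ∀ i j, v i j ≠ 0 → q i = b j := by
      intro i j hij
      set t : Finset (Fin n) := Finset.univ.filter (fun k => v k j ≠ 0) with htdef
      have hit : i ∈ t := by simp [htdef, hij]
      have hwt : ∑ k ∈ t, v k j = 1 := by
        rw [← hvcol j]
        exact Finset.sum_subset (Finset.filter_subset _ _)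
          (fun k _ hk => by simpa [htdef] using hk)
      have hat : ∑ k ∈ t, v k j * q k = b j := by
        rw [hbdef]
        exact Finset.sum_subset (Finset.filter_subset _ _)
          (fun k _ hk => by simp [htdef] at hk; simp [hk])
      have hft : ∑ k ∈ t, v k j * Real.negMulLog (q k) = Real.negMulLog (b j) := by
        rw [← hAeqσ j]
        exact Finset.sum_subset (Finset.filter_subset _ _)
          (fun k _ hk => by simp [htdef] at hk; simp [hk])
      have hconst := Real.strictConcaveOn_negMulLog.eq_of_map_sum_eq (t := t)
        (w := fun k => v k j) (p := q)
        (fun k hk => lt_of_le_of_ne (hv0 k j) (by simp [htdef] at hk; exact Ne.symm hk))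
        hwt (fun k _ => hq0 k)
        (by rw [show ∑ k ∈ t, v k j • q k = b j by simpa [smul_eq_mul] using hat]
            simp only [smul_eq_mul]
            rw [hft])
      have : b j = q i := by
        calc b j = ∑ k ∈ t, v k j * q k := hat.symm
          _ = ∑ k ∈ t, v k j * q i := Finset.sum_congr rfl fun k hk => by
              rw [hconst hk hit]
          _ = q i := by rw [← Finset.sum_mul, hwt, one_mul]
      exact this.symm
    -- reconstruct
    have hρU : ρ * U = U * diagonal (fun j => ((a j : ℝ) : ℂ)) := hwrec a hkeyρ
    have hσU : σ * U = U * diagonal (fun j => ((b j : ℝ) : ℂ)) := hvrec b hkeyσ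
    have hdiagab : (diagonal (fun j => ((a j : ℝ) : ℂ)) : Matrix (Fin n) (Fin n) ℂ) =
        diagonal (fun j => ((b j : ℝ) : ℂ)) := by
      rw [show a = b from funext hab]
    have hρσU : ρ * U = σ * U := by rw [hρU, hσU, hdiagab]
    have hU1 : U * star U = 1 := Unitary.coe_mul_star_self hτh.eigenvectorUnitary
    calc ρ = ρ * (U * star U) := by rw [hU1, mul_one]
      _ = (ρ * U) * star U := by rw [mul_assoc]
      _ = (σ * U) * star U := by rw [hρσU]
      _ = σ * (U * star U) := by rw [mul_assoc]
      _ = σ := by rw [hU1, mul_one]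
  · -- ρ = σ → equality
    intro heq
    subst heq
    have hτρ : τ = ρ := by
      rw [hτdef, ← add_smul]
      norm_cast
      simp
    rw [hτρ]
    ring
end

section
/- Let n₁,…,n_k and m₁,…,m_k be positive integers, N = Σ_i n_i·m_i, identify the index set of size N with Σ i, (Fin n_i × Fin m_i), and let 𝔄 ⊆ M_N(ℂ) be the subalgebra of all block matrices of the form ⊕_{i=1}^{k} (X_i ⊗ I_{m_i}) with X_i ∈ M_{n_i}(ℂ). Then the commutant of 𝔄 in M_N(ℂ), i.e. { T ∈ M_N(ℂ) : T·A = A·T for all A ∈ 𝔄 }, equals the set of all matrices of the form ⊕_{i=1}^{k} (I_{n_i} ⊗ Y_i) with Y_i ∈ M_{m_i}(ℂ). -/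
open Matrix
open scoped Kronecker

set_option linter.unusedSectionVars false

section Aux
variable {ι : Type*} [Fintype ι] [DecidableEq ι] {σ : ι → Type*}
  [∀ i, Fintype (σ i)] [∀ i, DecidableEq (σ i)]

lemma aux_mul_bd (T : Matrix (Σ i, σ i) (Σ i, σ i) ℂ) (M : ∀ i, Matrix (σ i) (σ i) ℂ)
    (i j : ι) (p : σ i) (q : σ j) :
    (T * blockDiagonal' M) ⟨i, p⟩ ⟨j, q⟩ = ∑ r : σ j, T ⟨i, p⟩ ⟨j, r⟩ * M j r q := by
  rw [mul_apply, ← Finset.univ_sigma_univ, Finset.sum_sigma]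
  rw [Fintype.sum_eq_single j]
  · simp [blockDiagonal'_apply_eq]
  · intro l hl
    exact Finset.sum_eq_zero fun r _ => by rw [blockDiagonal'_apply_ne _ _ _ hl, mul_zero]

lemma aux_bd_mul (T : Matrix (Σ i, σ i) (Σ i, σ i) ℂ) (M : ∀ i, Matrix (σ i) (σ i) ℂ)
    (i j : ι) (p : σ i) (q : σ j) :
    (blockDiagonal' M * T) ⟨i, p⟩ ⟨j, q⟩ = ∑ r : σ i, M i p r * T ⟨i, r⟩ ⟨j, q⟩ := by
  rw [mul_apply, ← Finset.univ_sigma_univ, Finset.sum_sigma]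
  rw [Fintype.sum_eq_single i]
  · simp [blockDiagonal'_apply_eq]
  · intro l hl
    exact Finset.sum_eq_zero fun r _ => by rw [blockDiagonal'_apply_ne _ _ _ (Ne.symm hl), zero_mul]

end Aux

/-- The commutant of the block algebra `𝔄 = { ⊕_i (X_i ⊗ I_{m i}) : X_i ∈ M_{n i}(ℂ) }`
inside `M_N(ℂ)` (with the `N = Σ_i n_i·m_i` indices identified with
`Σ i, Fin (n i) × Fin (m i)`) is exactly `{ ⊕_i (I_{n i} ⊗ Y_i) : Y_i ∈ M_{m i}(ℂ) }`. -/
theorem commutant_of_block_kronecker_algebra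
    (k : ℕ) (n m : Fin k → ℕ) (hn : ∀ i, 0 < n i) (hm : ∀ i, 0 < m i) :
    {T : Matrix (Σ i : Fin k, Fin (n i) × Fin (m i)) (Σ i : Fin k, Fin (n i) × Fin (m i)) ℂ |
      ∀ A, (∃ X : ∀ i, Matrix (Fin (n i)) (Fin (n i)) ℂ,
          A = Matrix.blockDiagonal' fun i => (X i) ⊗ₖ (1 : Matrix (Fin (m i)) (Fin (m i)) ℂ)) →
        T * A = A * T} =
    {T | ∃ Y : ∀ i, Matrix (Fin (m i)) (Fin (m i)) ℂ,
      T = Matrix.blockDiagonal' fun i => (1 : Matrix (Fin (n i)) (Fin (n i)) ℂ) ⊗ₖ (Y i)} := by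
  ext T
  constructor
  · intro hT
    -- key commutation equation with X = Pi.single i0 (stdBasisMatrix e f 1)
    have key : ∀ (i0 : Fin k) (e f : Fin (n i0)) (i j : Fin k)
        (a : Fin (n i)) (b : Fin (m i)) (c : Fin (n j)) (d : Fin (m j)),
        (∑ r : Fin (n j) × Fin (m j), T ⟨i, (a, b)⟩ ⟨j, r⟩ *
          (((Pi.single i0 (Matrix.single e f (1 : ℂ)) :
              ∀ l, Matrix (Fin (n l)) (Fin (n l)) ℂ) j) ⊗ₖ
            (1 : Matrix (Fin (m j)) (Fin (m j)) ℂ)) r (c, d)) =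
        (∑ r : Fin (n i) × Fin (m i),
          (((Pi.single i0 (Matrix.single e f (1 : ℂ)) :
              ∀ l, Matrix (Fin (n l)) (Fin (n l)) ℂ) i) ⊗ₖ
            (1 : Matrix (Fin (m i)) (Fin (m i)) ℂ)) (a, b) r * T ⟨i, r⟩ ⟨j, (c, d)⟩) := by
      intro i0 e f i j a b c d
      have h := hT _ ⟨Pi.single i0 (Matrix.single e f (1 : ℂ)), rfl⟩
      have h2 := congrFun (congrFun h ⟨i, (a, b)⟩) ⟨j, (c, d)⟩
      rwa [aux_mul_bd, aux_bd_mul] at h2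
    -- off-diagonal blocks vanish
    have hcol : ∀ (i j : Fin k), i ≠ j → ∀ (a : Fin (n i)) (b : Fin (m i))
        (c : Fin (n j)) (d : Fin (m j)), T ⟨i, (a, b)⟩ ⟨j, (c, d)⟩ = 0 := by
      intro i j hij a b c d
      have h := key j c c i j a b c d
      rw [Pi.single_eq_same, Pi.single_eq_of_ne hij] at h
      simp only [Fintype.sum_prod_type, kroneckerMap_apply, Matrix.single,
        Matrix.of_apply, one_apply, zero_kronecker, Matrix.zero_apply, zero_mul,
        Finset.sum_const_zero] at h
      simpa [Finset.mul_sum, mul_ite, Finset.sum_ite_eq, Finset.sum_ite_eq'] using h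
    -- diagonal-block structure
    have hdiag : ∀ (i : Fin k) (a e : Fin (n i)) (b d : Fin (m i)) (c : Fin (n i)),
        T ⟨i, (a, b)⟩ ⟨i, (e, d)⟩ =
          (if a = e then 1 else 0) * T ⟨i, (c, b)⟩ ⟨i, (c, d)⟩ := by
      intro i a e b d c
      have h := key i e c i i a b c d
      rw [Pi.single_eq_same] at h
      simp only [Fintype.sum_prod_type, kroneckerMap_apply, Matrix.single,
        Matrix.of_apply, one_apply] at h
      simp only [mul_ite, mul_one, mul_zero, ite_mul, one_mul, zero_mul] at h
      by_cases hae : a = e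
      · simpa [hae, Finset.sum_ite_eq] using h
      · simpa [hae, Ne.symm hae] using h
    refine ⟨fun i b d => T ⟨i, (⟨0, hn i⟩, b)⟩ ⟨i, (⟨0, hn i⟩, d)⟩, ?_⟩
    ext ⟨i, a, b⟩ ⟨j, c, d⟩
    rcases eq_or_ne i j with rfl | hij
    · rw [blockDiagonal'_apply_eq]
      simp only [kroneckerMap_apply, one_apply]
      rw [hdiag i a c b d ⟨0, hn i⟩]
      rfl
    · rw [blockDiagonal'_apply_ne _ _ _ hij, hcol i j hij]
  · rintro ⟨Y, rfl⟩ A ⟨X, rfl⟩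
    rw [← blockDiagonal'_mul, ← blockDiagonal'_mul]
    have hcomm : ∀ l, (1 : Matrix (Fin (n l)) (Fin (n l)) ℂ) ⊗ₖ Y l *
        (X l ⊗ₖ (1 : Matrix (Fin (m l)) (Fin (m l)) ℂ)) =
        X l ⊗ₖ (1 : Matrix (Fin (m l)) (Fin (m l)) ℂ) *
        ((1 : Matrix (Fin (n l)) (Fin (n l)) ℂ) ⊗ₖ Y l) := fun l => by
      rw [← mul_kronecker_mul, ← mul_kronecker_mul, one_mul, mul_one, one_mul, mul_one]
    simp only [hcomm]
end
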